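/- arXiv:0901.1298 — 4 statements merged into one kernel-verified Lean document; each statement's English description precedes it below -/
import Mathlib

section
/- The maps D and d on SC(T) satisfy D∘D = 0, d∘d = 0, and D∘d = d∘D; consequently (D+d)∘(D+d) = 0, i.e. D+d is a differential on SC(T). -/
open Polynomial Matrix

attribute [local instance] Classical.propDecidable

namespace Seifert

variable {V : Type} [Fintype V]

/-- A matching of a graph `G`: a finite set of edges of `G` that are pairwise disjoint. -/
def IsMatching (G : SimpleGraph V) (R : Finset (Sym2 V)) : Prop :=
  (∀ e ∈ R, e ∈ G.edgeSet) ∧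
    ∀ e ∈ R, ∀ f ∈ R, e ≠ f → ∀ v : V, v ∈ e → v ∉ f

/-- A perfect matching: a matching covering every vertex. -/
def IsPerfectMatching (G : SimpleGraph V) (R : Finset (Sym2 V)) : Prop :=
  IsMatching G R ∧ ∀ v : V, ∃ e ∈ R, v ∈ e

/-- A configuration on `G`: a matching (the set of red edges) together with an assignment
of a sign (`true` = plus, `false` = minus) to every vertex not covered by a red edge;
vertices covered by a red edge get `none`. -/
structure Config (G : SimpleGraph V) where
  red : Finset (Sym2 V)
  matching : IsMatching G red
  sign : V → Option Bool
  sign_none : ∀ v : V, sign v = none ↔ ∃ e ∈ red, v ∈ e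

instance (G : SimpleGraph V) : Finite (Config G) :=
  Finite.of_injective (fun C => (C.red, C.sign)) (by
    rintro ⟨r, hr, s, hs⟩ ⟨r', hr', s', hs'⟩ h
    simp only [Prod.mk.injEq] at h
    obtain ⟨h1, h2⟩ := h
    subst h1; subst h2; rfl)

noncomputable instance (G : SimpleGraph V) : Fintype (Config G) := Fintype.ofFinite _

/-- The grading `Q`: the number of minuses. -/
noncomputable def Qg {G : SimpleGraph V} (C : Config G) : ℕ :=
  (Finset.univ.filter fun v : V => C.sign v = some false).card

/-- The grading `E`: the number of minuses plus the number of red edges. -/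
noncomputable def Eg {G : SimpleGraph V} (C : Config G) : ℕ := Qg C + C.red.card

/-- `DStep C C'` holds iff `C'` is one of the summands of `D(C)`: it is obtained from `C`
by deleting one red edge `e` and assigning a plus to one endpoint of `e` and a minus to
the other. -/
def DStep {G : SimpleGraph V} (C C' : Config G) : Prop :=
  ∃ e ∈ C.red, C'.red = C.red.erase e ∧
    (∀ x : V, x ∉ e → C'.sign x = C.sign x) ∧
    ∃ u v : V, e = s(u, v) ∧ C'.sign u = some true ∧ C'.sign v = some false

/-- `dStep C C'` holds iff `C'` is one of the summands of `d(C)`: it is obtained from `C`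
by changing the sign of one vertex from plus to minus. -/
def dStep {G : SimpleGraph V} (C C' : Config G) : Prop :=
  C'.red = C.red ∧ ∃ w : V, C.sign w = some true ∧ C'.sign w = some false ∧
    ∀ x : V, x ≠ w → C'.sign x = C.sign x

/-- The linear map on spaces of `F₂`-valued functions induced by a relation `r`:
the basis vector of `a` is sent to the sum of the basis vectors of all `b` with `r a b`. -/
noncomputable def sumLin {α β : Type} [Fintype α] (r : α → β → Prop) :
    (α → ZMod 2) →ₗ[ZMod 2] (β → ZMod 2) where
  toFun f b := ∑ a : α, if r a b then f a else 0
  map_add' f g := by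
    funext b
    simp only [Pi.add_apply]
    rw [← Finset.sum_add_distrib]
    exact Finset.sum_congr rfl fun a _ => by by_cases h : r a b <;> simp [h]
  map_smul' c f := by
    funext b
    simp only [RingHom.id_apply, Pi.smul_apply, smul_eq_mul, Finset.mul_sum]
    exact Finset.sum_congr rfl fun a _ => by by_cases h : r a b <;> simp [h]

/-- The differential `D` on the total Seifert complex `SC(T)`. -/
noncomputable def Dmap (G : SimpleGraph V) :
    (Config G → ZMod 2) →ₗ[ZMod 2] (Config G → ZMod 2) :=
  sumLin DStep

/-- The differential `d` on the total Seifert complex `SC(T)`. -/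
noncomputable def dmap (G : SimpleGraph V) :
    (Config G → ZMod 2) →ₗ[ZMod 2] (Config G → ZMod 2) :=
  sumLin dStep

/-- The graded piece `SC^k(T,n)`: the `F₂`-vector space with basis the configurations
with `Q = k` and `E = n`. -/
abbrev SC (G : SimpleGraph V) (k n : ℤ) : Type :=
  {C : Config G // (Qg C : ℤ) = k ∧ (Eg C : ℤ) = n} → ZMod 2

/-- The differential `D` between graded pieces. (Mathematically it is nonzero only
from `SC^k(T,n)` to `SC^{k+1}(T,n)`.) -/
noncomputable def Dgr (G : SimpleGraph V) (k n k' n' : ℤ) :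
    SC G k n →ₗ[ZMod 2] SC G k' n' :=
  sumLin fun C C' => DStep C.1 C'.1

/-- The dimension of the cohomology `ker g / im f` at the middle term of `A —f→ B —g→ C`
(taking the image of `f` intersected with the kernel of `g`). -/
noncomputable def cohDim {A B M : Type} [AddCommGroup A] [AddCommGroup B] [AddCommGroup M]
    [Module (ZMod 2) A] [Module (ZMod 2) B] [Module (ZMod 2) M]
    (f : A →ₗ[ZMod 2] B) (g : B →ₗ[ZMod 2] M) : ℕ :=
  Module.finrank (ZMod 2)
    (LinearMap.ker g ⧸ (LinearMap.range f).comap (LinearMap.ker g).subtype)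

/-- The dimension of the Seifert cohomology `SH^k(T,n)`. -/
noncomputable def SHdim (G : SimpleGraph V) (k n : ℤ) : ℕ :=
  cohDim (Dgr G (k - 1) n k n) (Dgr G k n (k + 1) n)

/-- The Seifert matrix of a graph with respect to an enumeration of its vertices. -/
noncomputable def seifertMatrix (G : SimpleGraph V) {m : ℕ} (e : V ≃ Fin m) :
    Matrix (Fin m) (Fin m) ℤ := fun i j =>
  if i = j then -1 else if i < j ∧ G.Adj (e.symm i) (e.symm j) then 1 else 0

/-- The Alexander polynomial `det (t S - Sᵀ)` of a graph with respect to an enumeration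
of its vertices. -/
noncomputable def alexDet (G : SimpleGraph V) {m : ℕ} (e : V ≃ Fin m) : Polynomial ℤ :=
  let S : Matrix (Fin m) (Fin m) (Polynomial ℤ) :=
    (seifertMatrix G e).map fun a => (Polynomial.C a : Polynomial ℤ)
  ((X : Polynomial ℤ) • S - Sᵀ).det

/-- The Alexander polynomial of a graph (or forest), defined as the matching polynomial
`Σ_R t^{|R|} (1-t)^{V - 2|R|}`, the sum being over all matchings `R`. -/
noncomputable def alexMatch (G : SimpleGraph V) : Polynomial ℤ :=
  ∑ R : {R : Finset (Sym2 V) // IsMatching G R},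
    X ^ R.1.card * (1 - X) ^ (Fintype.card V - 2 * R.1.card)


set_option linter.unusedSectionVars false

section Aux
variable {G : SimpleGraph V}

lemma config_ext {C C' : Config G} (h1 : C.red = C'.red) (h2 : C.sign = C'.sign) : C = C' := by
  cases C; cases C'; cases h1; cases h2; rfl

lemma matching_subset {R S : Finset (Sym2 V)} (h : IsMatching G R) (hS : S ⊆ R) :
    IsMatching G S :=
  ⟨fun e he => h.1 e (hS he), fun e he f hf => h.2 e (hS he) f (hS hf)⟩

/-- flip the sign of `w` from `+` to `-`. -/
noncomputable def flipCfg (C : Config G) (w : V) (hw : C.sign w = some true) : Config G where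
  red := C.red
  matching := C.matching
  sign := fun x => if x = w then some false else C.sign x
  sign_none := by
    intro v
    by_cases h : v = w
    · subst h
      simp only [if_pos rfl]
      constructor
      · intro h; cases h
      · intro he
        have := (C.sign_none v).2 he
        rw [hw] at this; cases this
    · simp only [if_neg h]; exact C.sign_none v

lemma dStep_flipCfg (C : Config G) (w : V) (hw : C.sign w = some true) :
    dStep C (flipCfg C w hw) :=
  ⟨rfl, w, hw, by simp [flipCfg], fun x hx => by simp [flipCfg, hx]⟩

/-- remove the red edge `s(u,v)` and give `u` a `+` and `v` a `-`. -/
noncomputable def remCfg (C : Config G) (u v : V) (he : s(u, v) ∈ C.red) : Config G where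
  red := C.red.erase s(u, v)
  matching := matching_subset C.matching (Finset.erase_subset _ _)
  sign := fun x => if x = u then some true else if x = v then some false else C.sign x
  sign_none := by
    intro x
    by_cases hu : x = u
    · simp only [if_pos hu]
      constructor
      · intro h; cases h
      · rintro ⟨f, hf, hxf⟩
        have hfe : f ≠ s(u, v) := Finset.ne_of_mem_erase hf
        exact (C.matching.2 f (Finset.mem_of_mem_erase hf) _ he hfe x hxf
          (by rw [hu]; exact Sym2.mem_mk_left _ _)).elim
    · by_cases hv : x = v
      · simp only [if_neg hu, if_pos hv]
        constructor
        · intro h; cases h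
        · rintro ⟨f, hf, hxf⟩
          have hfe : f ≠ s(u, v) := Finset.ne_of_mem_erase hf
          exact (C.matching.2 f (Finset.mem_of_mem_erase hf) _ he hfe x hxf
            (by rw [hv]; exact Sym2.mem_mk_right _ _)).elim
      · simp only [if_neg hu, if_neg hv]
        rw [C.sign_none x]
        constructor
        · rintro ⟨f, hf, hxf⟩
          refine ⟨f, Finset.mem_erase_of_ne_of_mem ?_ hf, hxf⟩
          rintro rfl
          rcases Sym2.mem_iff.1 hxf with rfl | rfl
          · exact hu rfl
          · exact hv rfl
        · rintro ⟨f, hf, hxf⟩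
          exact ⟨f, Finset.mem_of_mem_erase hf, hxf⟩

lemma remCfg_sign_ne {C : Config G} {u v : V} (he : s(u, v) ∈ C.red) {x : V}
    (hu : x ≠ u) (hv : x ≠ v) : (remCfg C u v he).sign x = C.sign x := by
  simp [remCfg, hu, hv]

lemma uv_ne {C : Config G} {u v : V} (he : s(u, v) ∈ C.red) : u ≠ v := by
  intro h
  subst h
  have := C.matching.1 _ he
  rw [SimpleGraph.mem_edgeSet] at this
  exact G.loopless.irrefl u this

lemma DStep_remCfg (C : Config G) (u v : V) (he : s(u, v) ∈ C.red) :
    DStep C (remCfg C u v he) := by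
  refine ⟨s(u, v), he, rfl, ?_, u, v, rfl, by simp [remCfg], ?_⟩
  · intro x hx
    rw [Sym2.mem_iff] at hx
    push_neg at hx
    exact remCfg_sign_ne he hx.1 hx.2
  · simp [remCfg, (uv_ne he).symm]



/-! ### Witness extraction and uniqueness -/

lemma flip_wit_unique {C C' : Config G} {w w' : V}
    (h1 : C.sign w = some true) (h2 : C'.sign w = some false)
    (h3 : ∀ x, x ≠ w' → C'.sign x = C.sign x) : w = w' := by
  by_contra hne
  rw [h3 w hne, h1] at h2
  cases h2

lemma erase_unique {R : Finset (Sym2 V)} {e f : Sym2 V} (he : e ∈ R) (h : R.erase e = R.erase f) :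
    e = f := by
  by_contra hne
  have : e ∈ R.erase f := Finset.mem_erase_of_ne_of_mem hne he
  rw [← h] at this
  exact Finset.notMem_erase e R this

lemma pair_unique {C' : Config G} {u v u' v' : V} (h : s(u, v) = s(u', v'))
    (hu : C'.sign u = some true) (hv : C'.sign v = some false)
    (hu' : C'.sign u' = some true) (hv' : C'.sign v' = some false) : u = u' ∧ v = v' := by
  rcases Sym2.eq_iff.1 h with ⟨rfl, rfl⟩ | ⟨rfl, rfl⟩
  · exact ⟨rfl, rfl⟩
  · rw [hu] at hv'; cases hv'

noncomputable def dWit {C C' : Config G} (h : dStep C C') : V := h.2.choose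

lemma dWit_spec {C C' : Config G} (h : dStep C C') :
    C.sign (dWit h) = some true ∧ C'.sign (dWit h) = some false ∧
      ∀ x, x ≠ dWit h → C'.sign x = C.sign x := h.2.choose_spec

lemma dWit_eq {C C' : Config G} (h : dStep C C') {w : V}
    (h1 : C.sign w = some true) (h2 : C'.sign w = some false) : dWit h = w :=
  (flip_wit_unique h1 h2 (dWit_spec h).2.2).symm

noncomputable def DWit {C C' : Config G} (h : DStep C C') : V × V :=
  (h.choose_spec.2.2.2.choose, h.choose_spec.2.2.2.choose_spec.choose)

lemma DWit_spec {C C' : Config G} (h : DStep C C') :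
    s((DWit h).1, (DWit h).2) ∈ C.red ∧ C'.red = C.red.erase s((DWit h).1, (DWit h).2) ∧
      (∀ x, x ∉ s((DWit h).1, (DWit h).2) → C'.sign x = C.sign x) ∧
      C'.sign (DWit h).1 = some true ∧ C'.sign (DWit h).2 = some false := by
  obtain ⟨hmem, hred, hsgn, -⟩ := h.choose_spec
  obtain ⟨heq, hu, hv⟩ := h.choose_spec.2.2.2.choose_spec.choose_spec
  rw [show s((DWit h).1, (DWit h).2) = h.choose from heq.symm]
  exact ⟨hmem, hred, hsgn, hu, hv⟩

lemma DWit_eq {C C' : Config G} (h : DStep C C') {u v : V}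
    (hm : s(u, v) ∈ C.red) (hred : C'.red = C.red.erase s(u, v))
    (hu : C'.sign u = some true) (hv : C'.sign v = some false) : DWit h = (u, v) := by
  obtain ⟨hm', hred', hsgn', hu', hv'⟩ := DWit_spec h
  have he : s((DWit h).1, (DWit h).2) = s(u, v) := erase_unique hm' (hred'.symm.trans hred)
  obtain ⟨h1, h2⟩ := pair_unique he hu' hv' hu hv
  exact Prod.ext h1 h2

/-! ### Canonical forms -/

lemma dStep_eq_flip {C C' : Config G} {w : V} (hred : C'.red = C.red)
    (h1 : C.sign w = some true) (h2 : C'.sign w = some false)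
    (h3 : ∀ x, x ≠ w → C'.sign x = C.sign x) : C' = flipCfg C w h1 := by
  refine config_ext hred (funext fun x => ?_)
  show C'.sign x = if x = w then some false else C.sign x
  by_cases hx : x = w
  · rw [if_pos hx, hx, h2]
  · rw [if_neg hx, h3 x hx]

lemma DStep_eq_rem {C C' : Config G} {u v : V} (he : s(u, v) ∈ C.red)
    (hred : C'.red = C.red.erase s(u, v)) (hu : C'.sign u = some true)
    (hv : C'.sign v = some false) (hs : ∀ x, x ∉ s(u, v) → C'.sign x = C.sign x) :
    C' = remCfg C u v he := by
  refine config_ext hred (funext fun x => ?_)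
  show C'.sign x = if x = u then some true else if x = v then some false else C.sign x
  by_cases hxu : x = u
  · rw [if_pos hxu, hxu, hu]
  · by_cases hxv : x = v
    · rw [if_neg hxu, if_pos hxv, hxv, hv]
    · rw [if_neg hxu, if_neg hxv]
      exact hs x (by rw [Sym2.mem_iff]; push_neg; exact ⟨hxu, hxv⟩)

lemma uncovered_not_mem {C : Config G} {w : V} (hw : C.sign w = some true)
    {e : Sym2 V} (he : e ∈ C.red) : w ∉ e := by
  intro hmem
  have := (C.sign_none w).2 ⟨e, he, hmem⟩
  rw [hw] at this
  cases this



/-! ### d ∘ d = 0 -/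

lemma gd_pf {C C' C'' : Config G} (h : dStep C C' ∧ dStep C' C'') :
    C.sign (dWit h.2) = some true := by
  obtain ⟨hw1, hw2, hw3⟩ := dWit_spec h.2
  obtain ⟨hred, w, hC1, hC2, hC3⟩ := h.1
  have hne : dWit h.2 ≠ w := by
    intro hh
    rw [hh, hC2] at hw1
    cases hw1
  rw [← hC3 _ hne]
  exact hw1

noncomputable def gd (C C'' : Config G) (C' : Config G) : Config G :=
  if h : dStep C C' ∧ dStep C' C'' then flipCfg C (dWit h.2) (gd_pf h) else C'

lemma gd_chain {C C' C'' : Config G} (h : dStep C C' ∧ dStep C' C'') :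
    dStep C (gd C C'' C') ∧ dStep (gd C C'' C') C'' := by
  rw [gd, dif_pos h]
  obtain ⟨hw1, hw2, hw3⟩ := dWit_spec h.2
  obtain ⟨hred, w, hC1, hC2, hC3⟩ := h.1
  have hne : dWit h.2 ≠ w := by
    intro hh; rw [hh, hC2] at hw1; cases hw1
  refine ⟨dStep_flipCfg C _ _, ?_, w, ?_, ?_, ?_⟩
  · show C''.red = C.red
    rw [h.2.1, hred]
  · show (if w = dWit h.2 then some false else C.sign w) = some true
    rw [if_neg (Ne.symm hne), hC1]
  · rw [hw3 w (Ne.symm hne), hC2]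
  · intro x hx
    show C''.sign x = if x = dWit h.2 then some false else C.sign x
    by_cases hxd : x = dWit h.2
    · rw [if_pos hxd, hxd, hw2]
    · rw [if_neg hxd, hw3 x hxd, hC3 x hx]

lemma gd_gd (C C'' : Config G) (C' : Config G) : gd C C'' (gd C C'' C') = C' := by
  by_cases h : dStep C C' ∧ dStep C' C''
  · have hchain := gd_chain h
    have hg : gd C C'' C' = flipCfg C (dWit h.2) (gd_pf h) := by rw [gd, dif_pos h]
    obtain ⟨hred, w, hC1, hC2, hC3⟩ := h.1
    obtain ⟨hw1, hw2, hw3⟩ := dWit_spec h.2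
    have hne : dWit h.2 ≠ w := by
      intro hh; rw [hh, hC2] at hw1; cases hw1
    rw [hg]
    have h' : dStep C (flipCfg C (dWit h.2) (gd_pf h)) ∧
        dStep (flipCfg C (dWit h.2) (gd_pf h)) C'' := by rw [← hg]; exact hchain
    rw [gd, dif_pos h']
    have hwit : dWit h'.2 = w := by
      apply dWit_eq
      · show (if w = dWit h.2 then some false else C.sign w) = some true
        rw [if_neg (Ne.symm hne), hC1]
      · rw [hw3 w (Ne.symm hne), hC2]
    have key : ∀ (z : V) (hz : C.sign z = some true), z = w →
        flipCfg C z hz = C' := by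
      rintro z hz rfl
      exact (dStep_eq_flip hred hz hC2 hC3).symm
    exact key _ _ hwit
  · have hg : gd C C'' C' = C' := by rw [gd, dif_neg h]
    rw [hg, hg]

lemma gd_ne {C C' C'' : Config G} (h : dStep C C' ∧ dStep C' C'') : gd C C'' C' ≠ C' := by
  rw [gd, dif_pos h]
  intro heq
  obtain ⟨hw1, hw2, hw3⟩ := dWit_spec h.2
  have : (flipCfg C (dWit h.2) (gd_pf h)).sign (dWit h.2) = C'.sign (dWit h.2) := by rw [heq]
  rw [hw1] at this
  simp [flipCfg] at this

lemma key_A (C C'' : Config G) :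
    ∑ C' : Config G, (if dStep C C' ∧ dStep C' C'' then (1 : ZMod 2) else 0) = 0 := by
  classical
  apply Finset.sum_ninvolution (gd C C'')
  · intro C'
    by_cases h : dStep C C' ∧ dStep C' C''
    · rw [if_pos h, if_pos (gd_chain h)]; decide
    · rw [gd, dif_neg h, if_neg h]; decide
  · intro C' hne
    have h : dStep C C' ∧ dStep C' C'' := by
      by_contra hh; rw [if_neg hh] at hne; exact hne rfl
    exact gd_ne h
  · intro C'; exact Finset.mem_univ _
  · exact gd_gd C C''



/-! ### D ∘ D = 0 -/

lemma gD_pf {C C' C'' : Config G} (h : DStep C C' ∧ DStep C' C'') :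
    s((DWit h.2).1, (DWit h.2).2) ∈ C.red := by
  have hm := (DWit_spec h.2).1
  obtain ⟨e, he, hred, -, -⟩ := h.1
  rw [hred] at hm
  exact Finset.mem_of_mem_erase hm

noncomputable def gD (C C'' : Config G) (C' : Config G) : Config G :=
  if h : DStep C C' ∧ DStep C' C'' then
    remCfg C (DWit h.2).1 (DWit h.2).2 (gD_pf h)
  else C'

lemma DD_facts {C C' C'' : Config G} (h : DStep C C' ∧ DStep C' C'') :
    ∀ u v : V, (∃ he : s(u, v) ∈ C.red, C'.red = C.red.erase s(u, v) ∧
        (∀ x, x ∉ s(u, v) → C'.sign x = C.sign x) ∧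
        C'.sign u = some true ∧ C'.sign v = some false) →
      s(u, v) ≠ s((DWit h.2).1, (DWit h.2).2) ∧
        u ∉ s((DWit h.2).1, (DWit h.2).2) ∧ v ∉ s((DWit h.2).1, (DWit h.2).2) ∧
        C''.sign u = some true ∧ C''.sign v = some false ∧
        C''.red = (C.red.erase s((DWit h.2).1, (DWit h.2).2)).erase s(u, v) := by
  rintro u v ⟨he, hred1, hsgn1, hu1, hv1⟩
  obtain ⟨hm2, hred2, hsgn2, hu2, hv2⟩ := DWit_spec h.2
  have hfC : s((DWit h.2).1, (DWit h.2).2) ∈ C.red := gD_pf h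
  have hef : s(u, v) ≠ s((DWit h.2).1, (DWit h.2).2) := by
    rw [hred1] at hm2
    exact fun hh => Finset.notMem_erase _ _ (hh ▸ hm2)
  have hu_nf : u ∉ s((DWit h.2).1, (DWit h.2).2) :=
    C.matching.2 _ he _ hfC hef u (Sym2.mem_mk_left _ _)
  have hv_nf : v ∉ s((DWit h.2).1, (DWit h.2).2) :=
    C.matching.2 _ he _ hfC hef v (Sym2.mem_mk_right _ _)
  refine ⟨hef, hu_nf, hv_nf, ?_, ?_, ?_⟩
  · rw [hsgn2 u hu_nf]; exact hu1
  · rw [hsgn2 v hv_nf]; exact hv1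
  · rw [hred2, hred1, Finset.erase_right_comm]

lemma gD_chain {C C' C'' : Config G} (h : DStep C C' ∧ DStep C' C'') :
    DStep C (gD C C'' C') ∧ DStep (gD C C'' C') C'' := by
  rw [gD, dif_pos h]
  obtain ⟨e, he, hred1, hsgn1, u, v, heq, hu1, hv1⟩ := h.1
  subst heq
  obtain ⟨hef, hu_nf, hv_nf, hu3, hv3, hred3⟩ :=
    DD_facts h u v ⟨he, hred1, hsgn1, hu1, hv1⟩
  obtain ⟨hm2, hred2, hsgn2, hu2, hv2⟩ := DWit_spec h.2
  have hp : (DWit h.2).1 ≠ (DWit h.2).2 := by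
    intro hh; rw [hh, hv2] at hu2; cases hu2
  refine ⟨DStep_remCfg C _ _ _, s(u, v), ?_, ?_, ?_, u, v, rfl, ?_, ?_⟩
  · exact Finset.mem_erase_of_ne_of_mem hef he
  · exact hred3
  · intro x hx
    by_cases h1 : x = (DWit h.2).1
    · rw [h1]
      show C''.sign _ = if _ = (DWit h.2).1 then some true else _
      rw [if_pos rfl]; exact hu2
    · by_cases h2 : x = (DWit h.2).2
      · rw [h2]
        show C''.sign _ = if (DWit h.2).2 = (DWit h.2).1 then some true
          else if (DWit h.2).2 = (DWit h.2).2 then some false else _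
        rw [if_neg (Ne.symm hp), if_pos rfl]; exact hv2
      · have hxf : x ∉ s((DWit h.2).1, (DWit h.2).2) := by
          rw [Sym2.mem_iff]; push_neg; exact ⟨h1, h2⟩
        rw [remCfg_sign_ne _ h1 h2, hsgn2 x hxf, hsgn1 x hx]
  · exact hu3
  · exact hv3

lemma gD_gD (C C'' : Config G) (C' : Config G) : gD C C'' (gD C C'' C') = C' := by
  by_cases h : DStep C C' ∧ DStep C' C''
  · have hchain := gD_chain h
    have hg : gD C C'' C' = remCfg C (DWit h.2).1 (DWit h.2).2 (gD_pf h) := by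
      rw [gD, dif_pos h]
    obtain ⟨e, he, hred1, hsgn1, u, v, heq, hu1, hv1⟩ := h.1
    subst heq
    obtain ⟨hef, hu_nf, hv_nf, hu3, hv3, hred3⟩ :=
      DD_facts h u v ⟨he, hred1, hsgn1, hu1, hv1⟩
    rw [hg]
    have h' : DStep C (remCfg C (DWit h.2).1 (DWit h.2).2 (gD_pf h)) ∧
        DStep (remCfg C (DWit h.2).1 (DWit h.2).2 (gD_pf h)) C'' := by
      rw [← hg]; exact hchain
    rw [gD, dif_pos h']
    have hwit : DWit h'.2 = (u, v) := by
      apply DWit_eq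
      · show s(u, v) ∈ (C.red.erase _)
        exact Finset.mem_erase_of_ne_of_mem hef he
      · exact hred3
      · exact hu3
      · exact hv3
    have key : ∀ (pr : V × V) (hpr : s(pr.1, pr.2) ∈ C.red), pr = (u, v) →
        remCfg C pr.1 pr.2 hpr = C' := by
      rintro ⟨a, b⟩ hpr hh
      obtain ⟨rfl, rfl⟩ := Prod.mk.injEq .. ▸ hh
      exact (DStep_eq_rem hpr hred1 hu1 hv1 hsgn1).symm
    exact key _ _ hwit
  · have hg : gD C C'' C' = C' := by rw [gD, dif_neg h]
    rw [hg, hg]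

lemma gD_ne {C C' C'' : Config G} (h : DStep C C' ∧ DStep C' C'') : gD C C'' C' ≠ C' := by
  rw [gD, dif_pos h]
  intro heq
  obtain ⟨e, he, hred1, hsgn1, u, v, heq1, hu1, hv1⟩ := h.1
  subst heq1
  obtain ⟨hef, -, -, -, -, -⟩ := DD_facts h u v ⟨he, hred1, hsgn1, hu1, hv1⟩
  have : (remCfg C (DWit h.2).1 (DWit h.2).2 (gD_pf h)).red = C'.red := by rw [heq]
  rw [hred1] at this
  exact hef (erase_unique (gD_pf h) this).symm

lemma key_B (C C'' : Config G) :
    ∑ C' : Config G, (if DStep C C' ∧ DStep C' C'' then (1 : ZMod 2) else 0) = 0 := by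
  classical
  apply Finset.sum_ninvolution (gD C C'')
  · intro C'
    by_cases h : DStep C C' ∧ DStep C' C''
    · rw [if_pos h, if_pos (gD_chain h)]; decide
    · rw [gD, dif_neg h, if_neg h]; decide
  · intro C' hne
    have h : DStep C C' ∧ DStep C' C'' := by
      by_contra hh; rw [if_neg hh] at hne; exact hne rfl
    exact gD_ne h
  · intro C'; exact Finset.mem_univ _
  · exact gD_gD C C''



/-! ### D ∘ d = d ∘ D -/

lemma PC_excl {C C' C'' : Config G} (h1 : dStep C C' ∧ DStep C' C'')
    (h2 : DStep C C' ∧ dStep C' C'') : False := by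
  obtain ⟨e, he, hred, -⟩ := h2.1
  have h : C'.red = C.red := h1.1.1
  rw [hred] at h
  exact Finset.notMem_erase e C.red (by rw [h]; exact he)

lemma gC_pf1 {C C' C'' : Config G} (h1 : dStep C C' ∧ DStep C' C'') :
    s((DWit h1.2).1, (DWit h1.2).2) ∈ C.red := by
  have := (DWit_spec h1.2).1
  rwa [h1.1.1] at this

lemma gC_pf2 {C C' C'' : Config G} (h2 : DStep C C' ∧ dStep C' C'') :
    s((DWit h2.1).2, (DWit h2.1).1) ∈ C.red := by
  rw [Sym2.eq_swap]
  exact (DWit_spec h2.1).1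

lemma gC_pf3 {C C' C'' : Config G} (h2 : DStep C C' ∧ dStep C' C'')
    (hw : dWit h2.2 ≠ (DWit h2.1).1) : C.sign (dWit h2.2) = some true := by
  obtain ⟨hm, hred, hsgn, hu, hv⟩ := DWit_spec h2.1
  obtain ⟨hw1, hw2, hw3⟩ := dWit_spec h2.2
  have hne2 : dWit h2.2 ≠ (DWit h2.1).2 := by
    intro hh; rw [hh, hv] at hw1; cases hw1
  rw [← hsgn _ (by rw [Sym2.mem_iff]; push_neg; exact ⟨hw, hne2⟩)]
  exact hw1

noncomputable def gC (C C'' : Config G) (C' : Config G) : Config G :=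
  if h1 : dStep C C' ∧ DStep C' C'' then
    remCfg C (DWit h1.2).1 (DWit h1.2).2 (gC_pf1 h1)
  else if h2 : DStep C C' ∧ dStep C' C'' then
    if hw : dWit h2.2 = (DWit h2.1).1 then
      remCfg C (DWit h2.1).2 (DWit h2.1).1 (gC_pf2 h2)
    else flipCfg C (dWit h2.2) (gC_pf3 h2 hw)
  else C'

lemma gC_P1 {C C' C'' : Config G} (h1 : dStep C C' ∧ DStep C' C'') :
    DStep C (gC C C'' C') ∧ dStep (gC C C'' C') C'' := by
  rw [gC, dif_pos h1]
  obtain ⟨hm2, hred2, hsgn2, hu2, hv2⟩ := DWit_spec h1.2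
  obtain ⟨hredd, w, hC1, hC2, hC3⟩ := h1.1
  have hfC : s((DWit h1.2).1, (DWit h1.2).2) ∈ C.red := gC_pf1 h1
  have hwnf : w ∉ s((DWit h1.2).1, (DWit h1.2).2) := uncovered_not_mem hC1 hfC
  have hwp1 : w ≠ (DWit h1.2).1 := fun hh => hwnf (by rw [hh]; exact Sym2.mem_mk_left _ _)
  have hwp2 : w ≠ (DWit h1.2).2 := fun hh => hwnf (by rw [hh]; exact Sym2.mem_mk_right _ _)
  have hp : (DWit h1.2).1 ≠ (DWit h1.2).2 := by
    intro hh; rw [hh, hv2] at hu2; cases hu2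
  refine ⟨DStep_remCfg C _ _ _, ?_, w, ?_, ?_, ?_⟩
  · show C''.red = C.red.erase _
    rw [hred2, hredd]
  · rw [remCfg_sign_ne _ hwp1 hwp2]
    exact hC1
  · rw [hsgn2 w hwnf]
    exact hC2
  · intro x hx
    by_cases hx1 : x = (DWit h1.2).1
    · rw [hx1]
      show C''.sign _ = if _ = (DWit h1.2).1 then some true else _
      rw [if_pos rfl]
      exact hu2
    · by_cases hx2 : x = (DWit h1.2).2
      · rw [hx2]
        show C''.sign _ = if (DWit h1.2).2 = (DWit h1.2).1 then some true
          else if (DWit h1.2).2 = (DWit h1.2).2 then some false else _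
        rw [if_neg (Ne.symm hp), if_pos rfl]
        exact hv2
      · have hxf : x ∉ s((DWit h1.2).1, (DWit h1.2).2) := by
          rw [Sym2.mem_iff]; push_neg; exact ⟨hx1, hx2⟩
        rw [remCfg_sign_ne _ hx1 hx2, hsgn2 x hxf, hC3 x hx]

lemma gC_P2a {C C' C'' : Config G} (h2 : DStep C C' ∧ dStep C' C'')
    (hw : dWit h2.2 = (DWit h2.1).1) :
    DStep C (remCfg C (DWit h2.1).2 (DWit h2.1).1 (gC_pf2 h2)) ∧
      dStep (remCfg C (DWit h2.1).2 (DWit h2.1).1 (gC_pf2 h2)) C'' := by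
  obtain ⟨hm1, hred1, hsgn1, hu1, hv1⟩ := DWit_spec h2.1
  obtain ⟨hw1, hw2, hw3⟩ := dWit_spec h2.2
  have hp : (DWit h2.1).1 ≠ (DWit h2.1).2 := by
    intro hh; rw [hh, hv1] at hu1; cases hu1
  refine ⟨DStep_remCfg C _ _ _, ?_, (DWit h2.1).2, ?_, ?_, ?_⟩
  · show C''.red = C.red.erase _
    rw [h2.2.1, hred1, Sym2.eq_swap]
  · show (if (DWit h2.1).2 = (DWit h2.1).2 then some true else _) = some true
    rw [if_pos rfl]
  · rw [hw3 _ (by rw [hw]; exact Ne.symm hp), hv1]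
  · intro x hx
    by_cases hx1 : x = (DWit h2.1).1
    · rw [hx1]
      show C''.sign _ = if (DWit h2.1).1 = (DWit h2.1).2 then some true
        else if (DWit h2.1).1 = (DWit h2.1).1 then some false else _
      rw [if_neg hp, if_pos rfl, ← hw, hw2]
    · have hxf : x ∉ s((DWit h2.1).1, (DWit h2.1).2) := by
        rw [Sym2.mem_iff]; push_neg; exact ⟨hx1, hx⟩
      rw [remCfg_sign_ne _ hx hx1, hw3 x (by rw [hw]; exact hx1), hsgn1 x hxf]

lemma gC_P2b {C C' C'' : Config G} (h2 : DStep C C' ∧ dStep C' C'')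
    (hw : dWit h2.2 ≠ (DWit h2.1).1) :
    dStep C (flipCfg C (dWit h2.2) (gC_pf3 h2 hw)) ∧
      DStep (flipCfg C (dWit h2.2) (gC_pf3 h2 hw)) C'' := by
  obtain ⟨hm1, hred1, hsgn1, hu1, hv1⟩ := DWit_spec h2.1
  obtain ⟨hw1, hw2, hw3⟩ := dWit_spec h2.2
  have hne2 : dWit h2.2 ≠ (DWit h2.1).2 := by
    intro hh; rw [hh, hv1] at hw1; cases hw1
  have hwnf : dWit h2.2 ∉ s((DWit h2.1).1, (DWit h2.1).2) := by
    rw [Sym2.mem_iff]; push_neg; exact ⟨hw, hne2⟩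
  refine ⟨dStep_flipCfg C _ _, s((DWit h2.1).1, (DWit h2.1).2), hm1, ?_, ?_,
    (DWit h2.1).1, (DWit h2.1).2, rfl, ?_, ?_⟩
  · show C''.red = C.red.erase _
    rw [h2.2.1, hred1]
  · intro x hx
    by_cases hxw : x = dWit h2.2
    · rw [hxw]
      show C''.sign _ = if dWit h2.2 = dWit h2.2 then some false else _
      rw [if_pos rfl, hw2]
    · show C''.sign x = if x = dWit h2.2 then some false else C.sign x
      rw [if_neg hxw, hw3 x hxw, hsgn1 x hx]
  · rw [hw3 _ (Ne.symm hw), hu1]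
  · rw [hw3 _ (Ne.symm hne2), hv1]



lemma gC_gC (C C'' : Config G) (C' : Config G) : gC C C'' (gC C C'' C') = C' := by
  by_cases h1 : dStep C C' ∧ DStep C' C''
  · have hchain := gC_P1 h1
    have hg : gC C C'' C' = remCfg C (DWit h1.2).1 (DWit h1.2).2 (gC_pf1 h1) := by
      rw [gC, dif_pos h1]
    rw [hg] at hchain ⊢
    obtain ⟨hm2, hred2, hsgn2, hu2, hv2⟩ := DWit_spec h1.2
    obtain ⟨hredd, w, hC1, hC2, hC3⟩ := h1.1
    have hfC : s((DWit h1.2).1, (DWit h1.2).2) ∈ C.red := gC_pf1 h1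
    have hwnf : w ∉ s((DWit h1.2).1, (DWit h1.2).2) := uncovered_not_mem hC1 hfC
    have hwp1 : w ≠ (DWit h1.2).1 := fun hh => hwnf (by rw [hh]; exact Sym2.mem_mk_left _ _)
    have hwp2 : w ≠ (DWit h1.2).2 := fun hh => hwnf (by rw [hh]; exact Sym2.mem_mk_right _ _)
    have hp : (DWit h1.2).1 ≠ (DWit h1.2).2 := by
      intro hh; rw [hh, hv2] at hu2; cases hu2
    have hn1 : ¬(dStep C (remCfg C (DWit h1.2).1 (DWit h1.2).2 (gC_pf1 h1)) ∧
        DStep (remCfg C (DWit h1.2).1 (DWit h1.2).2 (gC_pf1 h1)) C'') :=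
      fun hh => PC_excl hh hchain
    rw [gC, dif_neg hn1, dif_pos hchain]
    have hwitd : dWit hchain.2 = w := by
      apply dWit_eq
      · rw [remCfg_sign_ne _ hwp1 hwp2]; exact hC1
      · rw [hsgn2 w hwnf]; exact hC2
    have hwitD : DWit hchain.1 = ((DWit h1.2).1, (DWit h1.2).2) := by
      apply DWit_eq
      · exact hfC
      · rfl
      · show (if (DWit h1.2).1 = (DWit h1.2).1 then some true else _) = some true
        rw [if_pos rfl]
      · show (if (DWit h1.2).2 = (DWit h1.2).1 then some true
          else if (DWit h1.2).2 = (DWit h1.2).2 then some false else _) = some false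
        rw [if_neg (Ne.symm hp), if_pos rfl]
    rw [dif_neg (show ¬(dWit hchain.2 = (DWit hchain.1).1) by
      rw [hwitd, hwitD]; exact hwp1)]
    have key : ∀ (z : V) (hz : C.sign z = some true), z = w →
        flipCfg C z hz = C' := by
      rintro z hz rfl
      exact (dStep_eq_flip hredd hz hC2 hC3).symm
    exact key _ _ hwitd
  · by_cases h2 : DStep C C' ∧ dStep C' C''
    · have hg0 : gC C C'' C' = if hw : dWit h2.2 = (DWit h2.1).1 then
          remCfg C (DWit h2.1).2 (DWit h2.1).1 (gC_pf2 h2)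
        else flipCfg C (dWit h2.2) (gC_pf3 h2 hw) := by
        rw [gC, dif_neg h1, dif_pos h2]
      obtain ⟨hm1, hred1, hsgn1, hu1, hv1⟩ := DWit_spec h2.1
      obtain ⟨hw1, hw2, hw3⟩ := dWit_spec h2.2
      have hp : (DWit h2.1).1 ≠ (DWit h2.1).2 := by
        intro hh; rw [hh, hv1] at hu1; cases hu1
      by_cases hw : dWit h2.2 = (DWit h2.1).1
      · have hg : gC C C'' C' = remCfg C (DWit h2.1).2 (DWit h2.1).1 (gC_pf2 h2) := by
          rw [hg0, dif_pos hw]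
        have hchain := gC_P2a h2 hw
        have hn1 : ¬(dStep C (remCfg C (DWit h2.1).2 (DWit h2.1).1 (gC_pf2 h2)) ∧
            DStep (remCfg C (DWit h2.1).2 (DWit h2.1).1 (gC_pf2 h2)) C'') :=
          fun hh => PC_excl hh hchain
        rw [hg, gC, dif_neg hn1, dif_pos hchain]
        have hwitD : DWit hchain.1 = ((DWit h2.1).2, (DWit h2.1).1) := by
          apply DWit_eq
          · exact gC_pf2 h2
          · rfl
          · show (if (DWit h2.1).2 = (DWit h2.1).2 then some true else _) = some true
            rw [if_pos rfl]
          · show (if (DWit h2.1).1 = (DWit h2.1).2 then some true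
              else if (DWit h2.1).1 = (DWit h2.1).1 then some false else _) = some false
            rw [if_neg hp, if_pos rfl]
        have hwitd : dWit hchain.2 = (DWit h2.1).2 := by
          apply dWit_eq
          · show (if (DWit h2.1).2 = (DWit h2.1).2 then some true else _) = some true
            rw [if_pos rfl]
          · rw [hw3 _ (by rw [hw]; exact Ne.symm hp), hv1]
        rw [dif_pos (show dWit hchain.2 = (DWit hchain.1).1 by rw [hwitd, hwitD])]
        have key : ∀ (pr : V × V) (hpr : s(pr.2, pr.1) ∈ C.red),
            pr = ((DWit h2.1).2, (DWit h2.1).1) → remCfg C pr.2 pr.1 hpr = C' := by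
          rintro ⟨a, b⟩ hpr hh
          obtain ⟨rfl, rfl⟩ := Prod.mk.injEq .. ▸ hh
          exact (DStep_eq_rem hpr hred1 hu1 hv1 hsgn1).symm
        exact key _ _ hwitD
      · have hg : gC C C'' C' = flipCfg C (dWit h2.2) (gC_pf3 h2 hw) := by
          rw [hg0, dif_neg hw]
        have hchain := gC_P2b h2 hw
        rw [hg, gC, dif_pos hchain]
        have hne2 : dWit h2.2 ≠ (DWit h2.1).2 := by
          intro hh; rw [hh, hv1] at hw1; cases hw1
        have hwitD : DWit hchain.2 = ((DWit h2.1).1, (DWit h2.1).2) := by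
          apply DWit_eq
          · exact hm1
          · show C''.red = C.red.erase _
            rw [h2.2.1, hred1]
          · rw [hw3 _ (Ne.symm hw), hu1]
          · rw [hw3 _ (Ne.symm hne2), hv1]
        have key : ∀ (pr : V × V) (hpr : s(pr.1, pr.2) ∈ C.red),
            pr = ((DWit h2.1).1, (DWit h2.1).2) → remCfg C pr.1 pr.2 hpr = C' := by
          rintro ⟨a, b⟩ hpr hh
          obtain ⟨rfl, rfl⟩ := Prod.mk.injEq .. ▸ hh
          exact (DStep_eq_rem hpr hred1 hu1 hv1 hsgn1).symm
        exact key _ _ hwitD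
    · have hg : gC C C'' C' = C' := by rw [gC, dif_neg h1, dif_neg h2]
      rw [hg, hg]

lemma gC_ne {C C' C'' : Config G}
    (h : (dStep C C' ∧ DStep C' C'') ∨ (DStep C C' ∧ dStep C' C'')) :
    gC C C'' C' ≠ C' := by
  rcases h with h1 | h2
  · rw [gC, dif_pos h1]
    intro heq
    have hfC : s((DWit h1.2).1, (DWit h1.2).2) ∈ C.red := gC_pf1 h1
    have h3 : (remCfg C (DWit h1.2).1 (DWit h1.2).2 (gC_pf1 h1)).red = C'.red := by rw [heq]
    rw [h1.1.1] at h3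
    have h4 : C.red.erase s((DWit h1.2).1, (DWit h1.2).2) = C.red := h3
    rw [← h4] at hfC
    exact Finset.notMem_erase _ _ hfC
  · have hn1 : ¬(dStep C C' ∧ DStep C' C'') := fun hh => PC_excl hh h2
    rw [gC, dif_neg hn1, dif_pos h2]
    obtain ⟨hm1, hred1, hsgn1, hu1, hv1⟩ := DWit_spec h2.1
    have hp : (DWit h2.1).1 ≠ (DWit h2.1).2 := by
      intro hh; rw [hh, hv1] at hu1; cases hu1
    by_cases hw : dWit h2.2 = (DWit h2.1).1
    · rw [dif_pos hw]
      intro heq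
      have : (remCfg C (DWit h2.1).2 (DWit h2.1).1 (gC_pf2 h2)).sign (DWit h2.1).1 =
          C'.sign (DWit h2.1).1 := by rw [heq]
      rw [hu1] at this
      revert this
      show (if (DWit h2.1).1 = (DWit h2.1).2 then some true
        else if (DWit h2.1).1 = (DWit h2.1).1 then some false else _) = some true → False
      rw [if_neg hp, if_pos rfl]
      intro hh; cases hh
    · rw [dif_neg hw]
      intro heq
      have : (flipCfg C (dWit h2.2) (gC_pf3 h2 hw)).red = C'.red := by rw [heq]
      have h2' : C'.red = C.red.erase s((DWit h2.1).1, (DWit h2.1).2) := hred1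
      rw [h2'] at this
      exact Finset.notMem_erase _ _ (by rw [← this]; exact hm1)

lemma key_C (C C'' : Config G) :
    ∑ C' : Config G, (if dStep C C' ∧ DStep C' C'' then (1 : ZMod 2) else 0) =
      ∑ C' : Config G, (if DStep C C' ∧ dStep C' C'' then (1 : ZMod 2) else 0) := by
  classical
  have h0 : ∑ C' : Config G, ((if dStep C C' ∧ DStep C' C'' then (1 : ZMod 2) else 0) +
      (if DStep C C' ∧ dStep C' C'' then (1 : ZMod 2) else 0)) = 0 := by
    apply Finset.sum_ninvolution (gC C C'')
    · intro C'
      by_cases h1 : dStep C C' ∧ DStep C' C''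
      · have hchain := gC_P1 h1
        rw [if_pos h1, if_neg (fun hh => PC_excl h1 hh),
          if_neg (fun hh => PC_excl hh hchain), if_pos hchain]
        decide
      · by_cases h2 : DStep C C' ∧ dStep C' C''
        · rw [if_neg h1, if_pos h2]
          by_cases hw : dWit h2.2 = (DWit h2.1).1
          · have hg : gC C C'' C' = remCfg C (DWit h2.1).2 (DWit h2.1).1 (gC_pf2 h2) := by
              rw [gC, dif_neg h1, dif_pos h2, dif_pos hw]
            have hchain := gC_P2a h2 hw
            rw [hg, if_neg (fun hh => PC_excl hh hchain), if_pos hchain]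
            decide
          · have hg : gC C C'' C' = flipCfg C (dWit h2.2) (gC_pf3 h2 hw) := by
              rw [gC, dif_neg h1, dif_pos h2, dif_neg hw]
            have hchain := gC_P2b h2 hw
            rw [hg, if_pos hchain, if_neg (fun hh => PC_excl hchain hh)]
            decide
        · have hg : gC C C'' C' = C' := by rw [gC, dif_neg h1, dif_neg h2]
          rw [hg, if_neg h1, if_neg h2]
          decide
    · intro C' hne
      apply gC_ne
      by_contra hh
      rw [not_or] at hh
      rw [if_neg hh.1, if_neg hh.2] at hne
      exact hne rfl
    · intro C'; exact Finset.mem_univ _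
    · exact gC_gC C C''
  rw [Finset.sum_add_distrib] at h0
  have hz : ∀ a b : ZMod 2, a + b = 0 → a = b := by decide
  exact hz _ _ h0



lemma sumLin_comp_apply {α β γ : Type} [Fintype α] [Fintype β]
    (q : α → β → Prop) (r : β → γ → Prop) (f : α → ZMod 2) (c : γ) :
    (sumLin r ∘ₗ sumLin q) f c =
      ∑ a : α, (∑ b : β, if q a b ∧ r b c then (1 : ZMod 2) else 0) * f a := by
  show (∑ b : β, if r b c then (∑ a : α, if q a b then f a else 0) else 0) = _
  trans ∑ b : β, ∑ a : α, (if q a b ∧ r b c then (1 : ZMod 2) else 0) * f a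
  · refine Finset.sum_congr rfl fun b _ => ?_
    by_cases h : r b c
    · rw [if_pos h]
      refine Finset.sum_congr rfl fun a _ => ?_
      by_cases hq : q a b
      · rw [if_pos hq, if_pos ⟨hq, h⟩, one_mul]
      · rw [if_neg hq, if_neg (fun hh => hq hh.1), zero_mul]
    · rw [if_neg h]
      symm
      apply Finset.sum_eq_zero
      intro a _
      rw [if_neg (fun hh => h hh.2), zero_mul]
  · rw [Finset.sum_comm]
    exact Finset.sum_congr rfl fun a _ => (Finset.sum_mul ..).symm

end Aux

/-- `D ∘ D = 0`, `d ∘ d = 0`, `D ∘ d = d ∘ D`, and `(D+d) ∘ (D+d) = 0`. -/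
theorem D_d_are_commuting_differentials (G : SimpleGraph V) (hG : G.IsTree) :
    Dmap G ∘ₗ Dmap G = 0 ∧ dmap G ∘ₗ dmap G = 0 ∧
      Dmap G ∘ₗ dmap G = dmap G ∘ₗ Dmap G ∧
      (Dmap G + dmap G) ∘ₗ (Dmap G + dmap G) = 0 := by
  have hDD : Dmap G ∘ₗ Dmap G = 0 := by
    refine LinearMap.ext fun f => funext fun c => ?_
    rw [Dmap, sumLin_comp_apply]
    simp only [LinearMap.zero_apply, Pi.zero_apply]
    apply Finset.sum_eq_zero
    intro C' _
    rw [key_B C' c, zero_mul]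
  have hdd : dmap G ∘ₗ dmap G = 0 := by
    refine LinearMap.ext fun f => funext fun c => ?_
    rw [dmap, sumLin_comp_apply]
    simp only [LinearMap.zero_apply, Pi.zero_apply]
    apply Finset.sum_eq_zero
    intro C' _
    rw [key_A C' c, zero_mul]
  have hDd : Dmap G ∘ₗ dmap G = dmap G ∘ₗ Dmap G := by
    refine LinearMap.ext fun f => funext fun c => ?_
    rw [Dmap, dmap, sumLin_comp_apply, sumLin_comp_apply]
    refine Finset.sum_congr rfl fun C' _ => ?_
    rw [key_C C' c]
  refine ⟨hDD, hdd, hDd, ?_⟩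
  rw [LinearMap.add_comp, LinearMap.comp_add, LinearMap.comp_add, hDD, hdd, hDd,
    zero_add, add_zero]
  have h2 : ∀ L : (Config G → ZMod 2) →ₗ[ZMod 2] (Config G → ZMod 2), L + L = 0 := by
    intro L
    rw [← two_smul (ZMod 2) L, show (2 : ZMod 2) = 0 by decide, zero_smul]
  exact h2 _


end Seifert
end

section
/- For every finite tree T with V vertices, enumerated 1,…,V, with Seifert matrix S, the following identity holds in ℤ[t]: det(tS − Sᵀ) equals the sum over all matchings R of T of t^{|R|} (1−t)^{V−2|R|}. -/
open Polynomial Matrix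

attribute [local instance] Classical.propDecidable

namespace Seifert

variable {V : Type} [Fintype V]

section AuxProof

variable {V : Type} [Fintype V]

/-- Acyclicity: an admissible permutation squares to the identity. -/
lemma adm_sq (G : SimpleGraph V) (hG : G.IsAcyclic) (σ : Equiv.Perm V)
    (hadj : ∀ v, σ v ≠ v → G.Adj v (σ v)) : ∀ v, σ (σ v) = v := by
  intro v
  by_contra h2
  have hv : σ v ≠ v := fun h => h2 (by rw [h, h])
  set n := Function.minimalPeriod (⇑σ) v with hn
  have hord : (⇑σ)^[orderOf σ] v = v := by
    have h1 : σ ^ orderOf σ = 1 := pow_orderOf_eq_one σ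
    have := congrArg (fun τ : Equiv.Perm V => τ v) h1
    rw [Equiv.Perm.iterate_eq_pow]; exact this
  have hper : Function.IsPeriodicPt (⇑σ) (orderOf σ) v := hord
  have hnpos : 0 < n := hper.minimalPeriod_pos (orderOf_pos σ)
  have hitn : (⇑σ)^[n] v = v := Function.iterate_minimalPeriod
  have hinj : Set.InjOn (fun i => (⇑σ)^[i] v) (Set.Iio n) :=
    Function.iterate_injOn_Iio_minimalPeriod
  have hn1 : n ≠ 1 := fun h => hv (by simpa [h] using hitn)
  have hn2 : n ≠ 2 := fun h => h2 (by
    have := hitn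
    rw [h] at this
    simpa [Function.iterate_succ_apply'] using this)
  have hn3 : 3 ≤ n := by omega
  have hstep : ∀ i, σ ((⇑σ)^[i] v) ≠ (⇑σ)^[i] v := by
    intro i h
    apply hv
    have : (⇑σ)^[i] (σ v) = (⇑σ)^[i] v := by
      rw [← Function.iterate_succ_apply, Function.iterate_succ_apply', h]
    exact (σ.injective.iterate i) this
  have hadji : ∀ i, G.Adj ((⇑σ)^[i] v) ((⇑σ)^[i+1] v) := by
    intro i
    rw [Function.iterate_succ_apply']
    exact hadj _ (hstep i)
  -- build a path along the iterates
  have hwalk : ∀ k : ℕ, ∃ p : G.Walk v ((⇑σ)^[k] v),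
      p.support = (List.range (k+1)).map (fun i => (⇑σ)^[i] v) := by
    intro k
    induction k with
    | zero => exact ⟨SimpleGraph.Walk.nil, by rw [List.range_succ, List.range_zero]; rfl⟩
    | succ k ih =>
      obtain ⟨p, hp⟩ := ih
      refine ⟨p.concat (hadji k), ?_⟩
      have hr : (List.range (k+1+1)).map (fun i => (⇑σ)^[i] v) =
          (List.range (k+1)).map (fun i => (⇑σ)^[i] v) ++ [(⇑σ)^[k+1] v] := by
        rw [List.range_succ, List.map_append]; rfl
      rw [SimpleGraph.Walk.support_concat, hp, hr]
  obtain ⟨p, hp⟩ := hwalk (n - 1)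
  have hppath : p.IsPath := by
    apply SimpleGraph.Walk.IsPath.mk'
    rw [hp]
    refine List.Nodup.map_on ?_ List.nodup_range
    intro i hi j hj hij
    have hi' : i < n := by have := List.mem_range.1 hi; omega
    have hj' : j < n := by have := List.mem_range.1 hj; omega
    exact hinj hi' hj' hij
  have hlast_ne : (⇑σ)^[n-1] v ≠ v := by
    intro h
    have h0 : (fun i => (⇑σ)^[i] v) (n-1) = (fun i => (⇑σ)^[i] v) 0 := by simpa using h
    have := hinj (Set.mem_Iio.mpr (by omega)) (Set.mem_Iio.mpr hnpos) h0
    omega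
  have hadj_last : G.Adj v ((⇑σ)^[n-1] v) := by
    have : G.Adj ((⇑σ)^[n-1] v) ((⇑σ)^[n-1+1] v) := hadji (n-1)
    rw [show n - 1 + 1 = n by omega, hitn] at this
    exact this.symm
  set q : G.Walk v ((⇑σ)^[n-1] v) := SimpleGraph.Walk.cons hadj_last SimpleGraph.Walk.nil with hq
  have hqpath : q.IsPath := by
    apply SimpleGraph.Walk.IsPath.mk'
    simp only [hq, SimpleGraph.Walk.support_cons, SimpleGraph.Walk.support_nil,
      List.nodup_cons, List.mem_singleton, List.nodup_singleton, and_true]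
    exact ⟨fun h => hlast_ne (Eq.symm h), by simp, List.nodup_nil⟩
  have := SimpleGraph.isAcyclic_iff_path_unique.1 hG ⟨p, hppath⟩ ⟨q, hqpath⟩
  have hsupp := congrArg (fun r : G.Path v ((⇑σ)^[n-1] v) => r.1.support.length) this
  simp only [hp, hq] at hsupp
  rw [List.length_map, List.length_range] at hsupp
  simp [SimpleGraph.Walk.support_cons] at hsupp
  omega

/-- The Seifert matrix `t S - Sᵀ` transported to the vertex set. -/
noncomputable def Nmat (G : SimpleGraph V) {m : ℕ} (e : V ≃ Fin m) :
    Matrix V V (Polynomial ℤ) := fun v w =>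
  if v = w then 1 - X else
  if e v < e w ∧ G.Adj v w then X else
  if e w < e v ∧ G.Adj v w then -1 else 0

lemma Nmat_diag (G : SimpleGraph V) {m : ℕ} (e : V ≃ Fin m) (v : V) :
    Nmat G e v v = 1 - X := if_pos rfl

lemma Nmat_zero (G : SimpleGraph V) {m : ℕ} (e : V ≃ Fin m) {v w : V}
    (hne : v ≠ w) (h : ¬ G.Adj v w) : Nmat G e v w = 0 := by
  rw [Nmat, if_neg hne, if_neg (fun hc => h hc.2), if_neg (fun hc => h hc.2)]

lemma seifert_apply (G : SimpleGraph V) {m : ℕ} (e : V ≃ Fin m) (a b : V) :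
    seifertMatrix G e (e a) (e b) =
      if a = b then -1 else if e a < e b ∧ G.Adj a b then 1 else 0 := by
  simp only [seifertMatrix, Equiv.symm_apply_apply]
  by_cases hab : a = b
  · rw [if_pos hab, if_pos (by rw [hab])]
  · rw [if_neg hab, if_neg (fun h => hab (e.injective h))]

lemma Nmat_mul (G : SimpleGraph V) {m : ℕ} (e : V ≃ Fin m) {v w : V}
    (hadj : G.Adj v w) : Nmat G e w v * Nmat G e v w = - X := by
  have hne : v ≠ w := hadj.ne
  have hne' : e v ≠ e w := fun h => hne (e.injective h)
  rcases lt_or_gt_of_ne hne' with h | h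
  · have h1 : Nmat G e v w = X := by
      rw [Nmat, if_neg hne, if_pos ⟨h, hadj⟩]
    have h2 : Nmat G e w v = -1 := by
      rw [Nmat, if_neg (fun hc => hne hc.symm),
        if_neg (fun hc : e w < e v ∧ G.Adj w v => absurd hc.1 (asymm h)),
        if_pos ⟨h, hadj.symm⟩]
    rw [h1, h2]; ring
  · have h1 : Nmat G e v w = -1 := by
      rw [Nmat, if_neg hne,
        if_neg (fun hc : e v < e w ∧ G.Adj v w => absurd hc.1 (asymm h)),
        if_pos ⟨h, hadj⟩]
    have h2 : Nmat G e w v = X := by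
      rw [Nmat, if_neg (fun hc => hne hc.symm), if_pos ⟨h, hadj.symm⟩]
    rw [h1, h2]; ring

lemma alexDet_eq (G : SimpleGraph V) {m : ℕ} (e : V ≃ Fin m) :
    alexDet G e = (Nmat G e).det := by
  have hM : Nmat G e =
      (((X : Polynomial ℤ) • (seifertMatrix G e).map (fun a => (C a : Polynomial ℤ)) -
        ((seifertMatrix G e).map fun a => (C a : Polynomial ℤ))ᵀ)).submatrix e e := by
    apply Matrix.ext
    intro v w
    simp only [Matrix.submatrix_apply, Matrix.sub_apply, Matrix.smul_apply,
      Matrix.transpose_apply, Matrix.map_apply, smul_eq_mul]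
    rw [seifert_apply, seifert_apply]
    by_cases hvw : v = w
    · subst hvw
      rw [Nmat_diag, if_pos rfl]
      simp only [map_neg, Polynomial.C_1]
      ring
    · have hne : e v ≠ e w := fun h => hvw (e.injective h)
      rw [Nmat, if_neg hvw, if_neg hvw, if_neg (fun hc : w = v => hvw hc.symm)]
      by_cases hadj : G.Adj v w
      · rcases lt_or_gt_of_ne hne with h | h
        · rw [if_pos (⟨h, hadj⟩ : e v < e w ∧ G.Adj v w),
            if_pos (⟨h, hadj⟩ : e v < e w ∧ G.Adj v w),
            if_neg (fun hc : e w < e v ∧ G.Adj w v => absurd hc.1 (asymm h))]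
          simp
        · rw [if_neg (fun hc : e v < e w ∧ G.Adj v w => absurd hc.1 (asymm h)),
            if_pos (⟨h, hadj⟩ : e w < e v ∧ G.Adj v w),
            if_neg (fun hc : e v < e w ∧ G.Adj v w => absurd hc.1 (asymm h)),
            if_pos (⟨h, hadj.symm⟩ : e w < e v ∧ G.Adj w v)]
          simp
      · rw [if_neg (fun hc : e v < e w ∧ G.Adj v w => hadj hc.2),
          if_neg (fun hc : e w < e v ∧ G.Adj v w => hadj hc.2),
          if_neg (fun hc : e v < e w ∧ G.Adj v w => hadj hc.2),
          if_neg (fun hc : e w < e v ∧ G.Adj w v => hadj hc.2.symm)]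
        simp

  rw [alexDet, hM, Matrix.det_submatrix_equiv_self]

/-- The partner function of a matching. -/
noncomputable def mfun (R : Finset (Sym2 V)) (v : V) : V :=
  if h : ∃ e, e ∈ R ∧ v ∈ e then Sym2.Mem.other h.choose_spec.2 else v

lemma mfun_spec {G : SimpleGraph V} {R : Finset (Sym2 V)} (hR : IsMatching G R)
    {v : V} {f : Sym2 V} (hf : f ∈ R) (hv : v ∈ f) :
    s(v, mfun R v) = f ∧ mfun R v ≠ v := by
  have hex : ∃ e, e ∈ R ∧ v ∈ e := ⟨f, hf, hv⟩
  have hc := hex.choose_spec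
  have heq : hex.choose = f := by
    by_contra hne
    exact hR.2 _ hc.1 _ hf hne v hc.2 hv
  have h1 : s(v, mfun R v) = f := by
    rw [mfun, dif_pos hex, Sym2.other_spec hc.2, heq]
  refine ⟨h1, ?_⟩
  have hedge : f ∈ G.edgeSet := hR.1 f hf
  rw [← h1, SimpleGraph.mem_edgeSet] at hedge
  exact hedge.ne'

lemma mfun_fix {R : Finset (Sym2 V)} {v : V} (h : ¬ ∃ e, e ∈ R ∧ v ∈ e) :
    mfun R v = v := dif_neg h

lemma mfun_invol {G : SimpleGraph V} {R : Finset (Sym2 V)} (hR : IsMatching G R) :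
    Function.Involutive (mfun R) := by
  intro v
  by_cases h : ∃ e, e ∈ R ∧ v ∈ e
  · obtain ⟨f, hf, hv⟩ := h
    obtain ⟨h1, h2⟩ := mfun_spec hR hf hv
    have hw : mfun R v ∈ f := h1 ▸ Sym2.mem_mk_right _ _
    obtain ⟨h1', _⟩ := mfun_spec hR hf hw
    rw [← h1, Sym2.eq_iff] at h1'
    rcases h1' with ⟨hc, _⟩ | ⟨_, hc⟩
    · exact absurd hc h2
    · exact hc
  · have h2 : ¬ ∃ e, e ∈ R ∧ mfun R v ∈ e := by rwa [mfun_fix h]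
    rw [mfun_fix h2, mfun_fix h]

/-- The matching associated to an (admissible, involutive) permutation. -/
noncomputable def matchOf (σ : Equiv.Perm V) : Finset (Sym2 V) :=
  (Finset.univ.filter fun v => σ v ≠ v).image fun v => s(v, σ v)

lemma matchOf_edge_eq {σ : Equiv.Perm V} (hinv : ∀ v, σ (σ v) = v) {a x : V}
    (hx : x ∈ s(a, σ a)) : s(a, σ a) = s(x, σ x) := by
  rcases Sym2.mem_iff.1 hx with rfl | rfl
  · rfl
  · rw [hinv a, Sym2.eq_swap]

lemma matchOf_isMatching {G : SimpleGraph V} {σ : Equiv.Perm V}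
    (hinv : ∀ v, σ (σ v) = v) (hadj : ∀ v, σ v ≠ v → G.Adj v (σ v)) :
    IsMatching G (matchOf σ) := by
  constructor
  · intro f hf
    obtain ⟨a, ha, rfl⟩ := Finset.mem_image.1 hf
    exact (SimpleGraph.mem_edgeSet G).2 (hadj a (Finset.mem_filter.1 ha).2)
  · intro f hf g hg hfg x hxf hxg
    obtain ⟨a, _, rfl⟩ := Finset.mem_image.1 hf
    obtain ⟨b, _, rfl⟩ := Finset.mem_image.1 hg
    exact hfg ((matchOf_edge_eq hinv hxf).trans (matchOf_edge_eq hinv hxg).symm)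

lemma card_matchOf {σ : Equiv.Perm V} (hinv : ∀ v, σ (σ v) = v) :
    (Finset.univ.filter fun v => σ v ≠ v).card = 2 * (matchOf σ).card := by
  rw [Finset.card_eq_sum_card_image (fun v => s(v, σ v))]
  rw [Finset.sum_congr rfl (g := fun _ => 2) ?_, Finset.sum_const, smul_eq_mul, mul_comm]
  · rfl
  intro f hf
  obtain ⟨a, ha, rfl⟩ := Finset.mem_image.1 hf
  have ha' : σ a ≠ a := (Finset.mem_filter.1 ha).2
  have hset : (Finset.filter (fun u => s(u, σ u) = s(a, σ a))
      (Finset.univ.filter fun v => σ v ≠ v)) = {a, σ a} := by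
    ext u
    simp only [Finset.mem_filter, Finset.mem_univ, true_and, Finset.mem_insert,
      Finset.mem_singleton]
    constructor
    · rintro ⟨hu, heq⟩
      rw [Sym2.eq_iff] at heq
      rcases heq with ⟨h1, _⟩ | ⟨h1, _⟩
      · exact Or.inl h1
      · exact Or.inr h1
    · rintro (rfl | rfl)
      · exact ⟨ha', rfl⟩
      · refine ⟨?_, ?_⟩
        · rw [hinv a]; exact fun h => ha' h.symm
        · rw [hinv a, Sym2.eq_swap]
  rw [hset, Finset.card_insert_of_notMem (by simp [Ne.symm ha']), Finset.card_singleton]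

lemma prod_nmat_zero {G : SimpleGraph V} {m : ℕ} (e : V ≃ Fin m) {σ : Equiv.Perm V}
    (h : ¬ ∀ v, σ v ≠ v → G.Adj v (σ v)) : ∏ v, Nmat G e (σ v) v = 0 := by
  push_neg at h
  obtain ⟨v, hv, hnadj⟩ := h
  apply Finset.prod_eq_zero (Finset.mem_univ v)
  exact Nmat_zero G e hv (fun hc => hnadj hc.symm)

lemma mfun_matchOf {G : SimpleGraph V} {σ : Equiv.Perm V} (hinv : ∀ v, σ (σ v) = v)
    (hadj : ∀ v, σ v ≠ v → G.Adj v (σ v)) (v : V) : mfun (matchOf σ) v = σ v := by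
  have hM := matchOf_isMatching hinv hadj
  by_cases h : σ v = v
  · have hnc : ¬ ∃ f, f ∈ matchOf σ ∧ v ∈ f := by
      rintro ⟨f, hf, hvf⟩
      obtain ⟨a, ha, rfl⟩ := Finset.mem_image.1 hf
      have ha' : σ a ≠ a := (Finset.mem_filter.1 ha).2
      rcases Sym2.mem_iff.1 hvf with rfl | rfl
      · exact ha' h
      · exact ha' ((hinv a).symm.trans h).symm
    rw [mfun_fix hnc, h]
  · have hf : s(v, σ v) ∈ matchOf σ :=
      Finset.mem_image.2 ⟨v, Finset.mem_filter.2 ⟨Finset.mem_univ v, h⟩, rfl⟩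
    obtain ⟨h1, h2⟩ := mfun_spec hM hf (Sym2.mem_mk_left v (σ v))
    rw [Sym2.eq_iff] at h1
    rcases h1 with ⟨_, h1⟩ | ⟨h1, _⟩
    · exact h1
    · exact absurd h1.symm h

lemma matchOf_mfun {G : SimpleGraph V} {R : Finset (Sym2 V)} (hR : IsMatching G R) :
    matchOf (Function.Involutive.toPerm (mfun R) (mfun_invol hR)) = R := by
  ext f
  induction f using Sym2.ind with
  | _ a b =>
    simp only [matchOf, Function.Involutive.coe_toPerm]
    constructor
    · intro hf
      obtain ⟨c, hc, hcf⟩ := Finset.mem_image.1 hf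
      have hc' : mfun R c ≠ c := (Finset.mem_filter.1 hc).2
      have hcov : ∃ e, e ∈ R ∧ c ∈ e := by
        by_contra h; exact hc' (mfun_fix h)
      obtain ⟨g, hg, hcg⟩ := hcov
      obtain ⟨h1, _⟩ := mfun_spec hR hg hcg
      rw [← hcf, h1]
      exact hg
    · intro hf
      obtain ⟨h1, h2⟩ := mfun_spec hR hf (Sym2.mem_mk_left a b)
      exact Finset.mem_image.2 ⟨a, Finset.mem_filter.2 ⟨Finset.mem_univ a, h2⟩, h1⟩

lemma sign_prod (G : SimpleGraph V) {m : ℕ} (e : V ≃ Fin m) :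
    ∀ (k : ℕ) (σ : Equiv.Perm V), (∀ v, σ (σ v) = v) →
    (∀ v, σ v ≠ v → G.Adj v (σ v)) →
    (Finset.univ.filter fun v => σ v ≠ v).card = 2 * k →
    ((Equiv.Perm.sign σ : ℤ) : Polynomial ℤ) * ∏ v, Nmat G e (σ v) v =
      X ^ k * (1 - X) ^ (Fintype.card V - 2 * k) := by
  intro k
  induction k with
  | zero =>
    intro σ hinv hadj hcard
    have hfix : ∀ v, σ v = v := by
      intro v
      by_contra h
      have hmem : v ∈ Finset.univ.filter fun v => σ v ≠ v :=
        Finset.mem_filter.2 ⟨Finset.mem_univ v, h⟩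
      rw [Finset.card_eq_zero.1 (by omega : (Finset.univ.filter fun v => σ v ≠ v).card = 0)]
        at hmem
      exact absurd hmem (Finset.notMem_empty v)
    have hσ : σ = 1 := Equiv.ext hfix
    subst hσ
    simp only [Equiv.Perm.one_apply, Equiv.Perm.sign_one]
    rw [Finset.prod_congr rfl (fun v _ => Nmat_diag G e v), Finset.prod_const]
    simp [Finset.card_univ]
  | succ k ih =>
    intro σ hinv hadj hcard
    have hne : (Finset.univ.filter fun v => σ v ≠ v).Nonempty := by
      rw [← Finset.card_pos, hcard]; omega
    obtain ⟨v, hv⟩ := hne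
    have hσv : σ v ≠ v := (Finset.mem_filter.1 hv).2
    set w := σ v with hw
    have hwv : σ w = v := hinv v
    have hwne : w ≠ v := hσv
    have hadjvw : G.Adj v w := hadj v hσv
    set σ' := σ * Equiv.swap v w with hσ'
    have hσ'v : σ' v = v := by
      rw [hσ', Equiv.Perm.mul_apply, Equiv.swap_apply_left, hwv]
    have hσ'w : σ' w = w := by
      rw [hσ', Equiv.Perm.mul_apply, Equiv.swap_apply_right, ← hw]
    have hσ'x : ∀ x, x ≠ v → x ≠ w → σ' x = σ x := by
      intro x h1 h2
      rw [hσ', Equiv.Perm.mul_apply, Equiv.swap_apply_of_ne_of_ne h1 h2]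
    have hmove : ∀ x, x ≠ v → x ≠ w → (σ x ≠ v ∧ σ x ≠ w) := by
      intro x h1 h2
      constructor
      · intro h
        exact h2 (((hinv x).symm.trans (by rw [h])).trans hw.symm)
      · intro h
        exact h1 (σ.injective (h.trans hw))
    have hinv' : ∀ u, σ' (σ' u) = u := by
      intro u
      by_cases h1 : u = v
      · subst h1; rw [hσ'v, hσ'v]
      · by_cases h2 : u = w
        · subst h2; rw [hσ'w, hσ'w]
        · rw [hσ'x u h1 h2, hσ'x (σ u) (hmove u h1 h2).1 (hmove u h1 h2).2, hinv]
    have hadj' : ∀ u, σ' u ≠ u → G.Adj u (σ' u) := by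
      intro u hu
      by_cases h1 : u = v
      · subst h1; rw [hσ'v] at hu; exact absurd rfl hu
      · by_cases h2 : u = w
        · subst h2; rw [hσ'w] at hu; exact absurd rfl hu
        · rw [hσ'x u h1 h2] at hu ⊢; exact hadj u hu
    have hfilter : (Finset.univ.filter fun u => σ' u ≠ u) =
        ((Finset.univ.filter fun u => σ u ≠ u).erase v).erase w := by
      ext u
      simp only [Finset.mem_erase, Finset.mem_filter, Finset.mem_univ, true_and]
      constructor
      · intro hu
        have h1 : u ≠ v := by rintro rfl; exact hu hσ'v
        have h2 : u ≠ w := by rintro rfl; exact hu hσ'w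
        exact ⟨h2, h1, by rwa [hσ'x u h1 h2] at hu⟩
      · rintro ⟨h2, h1, hu⟩; rwa [hσ'x u h1 h2]
    have hwmem : w ∈ (Finset.univ.filter fun u => σ u ≠ u).erase v :=
      Finset.mem_erase.2 ⟨hwne, Finset.mem_filter.2 ⟨Finset.mem_univ w,
        by rw [hwv]; exact fun h => hwne h.symm⟩⟩
    have hcard' : (Finset.univ.filter fun u => σ' u ≠ u).card = 2 * k := by
      rw [hfilter, Finset.card_erase_of_mem hwmem, Finset.card_erase_of_mem hv, hcard]
      omega
    have hIH := ih σ' hinv' hadj' hcard'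
    have hsign' : Equiv.Perm.sign σ' = - Equiv.Perm.sign σ := by
      rw [hσ', _root_.map_mul, Equiv.Perm.sign_swap (Ne.symm hwne), mul_neg_one]
    have hsigncast : ((Equiv.Perm.sign σ : ℤ) : Polynomial ℤ) =
        -(((Equiv.Perm.sign σ' : ℤ) : Polynomial ℤ)) := by
      rw [hsign']; push_cast; ring
    have hwmem2 : w ∈ Finset.univ.erase v := Finset.mem_erase.2 ⟨hwne, Finset.mem_univ w⟩
    set P := ∏ u ∈ (Finset.univ.erase v).erase w, Nmat G e (σ u) u with hP
    have hprod : ∏ u, Nmat G e (σ u) u = Nmat G e w v * (Nmat G e v w * P) := by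
      rw [← Finset.mul_prod_erase Finset.univ (fun u => Nmat G e (σ u) u) (Finset.mem_univ v),
        ← Finset.mul_prod_erase (Finset.univ.erase v) (fun u => Nmat G e (σ u) u) hwmem2,
        ← hw, hwv]
    have hprod' : ∏ u, Nmat G e (σ' u) u = (1 - X) * ((1 - X) * P) := by
      rw [← Finset.mul_prod_erase Finset.univ (fun u => Nmat G e (σ' u) u) (Finset.mem_univ v),
        ← Finset.mul_prod_erase (Finset.univ.erase v) (fun u => Nmat G e (σ' u) u) hwmem2,
        hσ'v, hσ'w, Nmat_diag, Nmat_diag, hP]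
      congr 2
      apply Finset.prod_congr rfl
      intro u hu
      have h2 := (Finset.mem_erase.1 hu).1
      have h1 := (Finset.mem_erase.1 (Finset.mem_erase.1 hu).2).1
      rw [hσ'x u h1 h2]
    have hcV : 2 * (k + 1) ≤ Fintype.card V := by
      rw [← hcard, ← Finset.card_univ]
      exact Finset.card_filter_le _ _
    have hexp : Fintype.card V - 2 * k = (Fintype.card V - 2 * (k + 1)) + 2 := by omega
    have hc : (1 - X : Polynomial ℤ) ≠ 0 := by
      intro h
      have := congrArg (fun p : Polynomial ℤ => p.coeff 0) h
      simp at this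
    rw [hprod'] at hIH
    have hIH3 : (1 - X) * ((1 - X) * (((Equiv.Perm.sign σ' : ℤ) : Polynomial ℤ) * P)) =
        (1 - X) * ((1 - X) * (X ^ k * (1 - X) ^ (Fintype.card V - 2 * (k + 1)))) := by
      calc (1 - X) * ((1 - X) * (((Equiv.Perm.sign σ' : ℤ) : Polynomial ℤ) * P))
          = X ^ k * (1 - X) ^ (Fintype.card V - 2 * k) := by linear_combination hIH
        _ = (1 - X) * ((1 - X) * (X ^ k * (1 - X) ^ (Fintype.card V - 2 * (k + 1)))) := by
            rw [hexp, pow_add]; ring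
    have hPval : ((Equiv.Perm.sign σ' : ℤ) : Polynomial ℤ) * P =
        X ^ k * (1 - X) ^ (Fintype.card V - 2 * (k + 1)) :=
      mul_left_cancel₀ hc (mul_left_cancel₀ hc hIH3)
    rw [hprod, hsigncast]
    have hmul := Nmat_mul G e hadjvw
    calc -(((Equiv.Perm.sign σ' : ℤ) : Polynomial ℤ)) * (Nmat G e w v * (Nmat G e v w * P))
        = X * (((Equiv.Perm.sign σ' : ℤ) : Polynomial ℤ) * P) := by
          rw [show Nmat G e w v * (Nmat G e v w * P)
            = (Nmat G e w v * Nmat G e v w) * P by ring, hmul]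
          ring
      _ = X ^ (k + 1) * (1 - X) ^ (Fintype.card V - 2 * (k + 1)) := by
          rw [hPval]; ring

end AuxProof


/-- `det (t S - Sᵀ) = Σ_R t^{|R|} (1-t)^{V-2|R|}` in `ℤ[t]`. -/
theorem alexDet_eq_matching_sum (G : SimpleGraph V) (hG : G.IsTree)
    {m : ℕ} (e : V ≃ Fin m) :
    alexDet G e =
      ∑ R : {R : Finset (Sym2 V) // IsMatching G R},
        X ^ R.1.card * (1 - X) ^ (Fintype.card V - 2 * R.1.card) := by
  classical
  have hAc : G.IsAcyclic := hG.2
  rw [alexDet_eq, Matrix.det_apply']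
  rw [← Finset.sum_filter_add_sum_filter_not Finset.univ
    (fun σ : Equiv.Perm V => ∀ v, σ v ≠ v → G.Adj v (σ v))
    (fun σ : Equiv.Perm V =>
      ((Equiv.Perm.sign σ : ℤ) : Polynomial ℤ) * ∏ v, Nmat G e (σ v) v)]
  have hz : ∑ σ ∈ Finset.univ.filter
      (fun σ : Equiv.Perm V => ¬ ∀ v, σ v ≠ v → G.Adj v (σ v)),
      (((Equiv.Perm.sign σ : ℤ) : Polynomial ℤ) * ∏ v, Nmat G e (σ v) v) = 0 := by
    apply Finset.sum_eq_zero
    intro σ hσ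
    rw [prod_nmat_zero e (Finset.mem_filter.1 hσ).2, mul_zero]
  rw [hz, add_zero]
  refine Finset.sum_bij'
    (i := fun σ hσ => (⟨matchOf σ,
      matchOf_isMatching (adm_sq G hAc σ (Finset.mem_filter.1 hσ).2)
        (Finset.mem_filter.1 hσ).2⟩ : {R : Finset (Sym2 V) // IsMatching G R}))
    (j := fun R _ => Function.Involutive.toPerm (mfun R.1) (mfun_invol R.2))
    (fun σ hσ => Finset.mem_univ _)
    (fun R hR => ?_) (fun σ hσ => ?_) (fun R hR => ?_) (fun σ hσ => ?_)
  · refine Finset.mem_filter.2 ⟨Finset.mem_univ _, ?_⟩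
    intro x hx
    have hcov : ∃ f, f ∈ R.1 ∧ x ∈ f := by
      by_contra h
      exact hx (mfun_fix h)
    obtain ⟨f, hf, hxf⟩ := hcov
    obtain ⟨h1, _⟩ := mfun_spec R.2 hf hxf
    have hmem : s(x, mfun R.1 x) ∈ G.edgeSet := h1 ▸ R.2.1 f hf
    exact (SimpleGraph.mem_edgeSet G).1 hmem
  · apply Equiv.ext
    intro x
    exact mfun_matchOf (adm_sq G hAc σ (Finset.mem_filter.1 hσ).2)
      (Finset.mem_filter.1 hσ).2 x
  · exact Subtype.ext (matchOf_mfun R.2)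
  · have hinv := adm_sq G hAc σ (Finset.mem_filter.1 hσ).2
    have hadj := (Finset.mem_filter.1 hσ).2
    exact sign_prod G e (matchOf σ).card σ hinv hadj (card_matchOf hinv)

end Seifert
end

section
/- The polynomial det(tS − Sᵀ) does not depend on the enumeration of the vertices of T: if S and S' are the Seifert matrices of a finite tree T associated to two enumerations of its vertices, then det(tS − Sᵀ) = det(tS' − S'ᵀ) in ℤ[t]. -/
open Polynomial Matrix

attribute [local instance] Classical.propDecidable

namespace Seifert

variable {V : Type} [Fintype V]

set_option linter.unusedSectionVars false

/-- In an acyclic graph, a permutation moving each vertex to itself or a neighbor is an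
involution. -/
theorem sq_eq_one_of_adj {V : Type} [Fintype V] {G : SimpleGraph V} (hG : G.IsAcyclic)
    (σ : Equiv.Perm V) (h : ∀ v, σ v = v ∨ G.Adj (σ v) v) (v : V) : σ (σ v) = v := by
  by_contra hv
  have hσv : σ v ≠ v := fun h' => hv (by rw [h', h'])
  set f : V → V := ⇑σ with hf
  have hper : Function.IsPeriodicPt f (orderOf σ) v := by
    show f^[orderOf σ] v = v
    rw [hf, Equiv.Perm.iterate_eq_pow, pow_orderOf_eq_one]
    rfl
  set ℓ := Function.minimalPeriod f v with hℓ
  have hℓpos : 0 < ℓ := hper.minimalPeriod_pos (orderOf_pos σ)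
  have hiter : f^[ℓ] v = v := Function.iterate_minimalPeriod
  have hℓ1 : ℓ ≠ 1 := fun h1 => hσv (by simpa [h1] using hiter)
  have hℓ2 : ℓ ≠ 2 := fun h2 => hv (by simpa [h2, Function.iterate_succ_apply'] using hiter)
  have hℓ3 : 3 ≤ ℓ := by omega
  have hinj : (Set.Iio ℓ).InjOn (f^[·] v) := Function.iterate_injOn_Iio_minimalPeriod
  -- every point on the orbit is moved
  have hmov : ∀ a, a < ℓ → σ (f^[a] v) ≠ f^[a] v := by
    intro a ha hfix
    have hfixall : f^[ℓ - a] (f^[a] v) = f^[a] v := Function.iterate_fixed hfix _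
    rw [← Function.iterate_add_apply] at hfixall
    have : ℓ - a + a = ℓ := by omega
    rw [this, hiter] at hfixall
    rcases Nat.eq_zero_or_pos a with rfl | hpos
    · exact hσv (by simpa using hfix)
    · exact absurd (hinj (Set.mem_Iio.2 ha) (Set.mem_Iio.2 hℓpos) (by simpa using hfixall.symm)) (by omega)
  have hadj : ∀ a, a < ℓ → G.Adj (f^[a] v) (f^[a + 1] v) := by
    intro a ha
    rcases h (f^[a] v) with h' | h'
    · exact absurd h' (hmov a ha)
    · rw [Function.iterate_succ_apply']
      exact h'.symm
  -- build the long path from σ v to v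
  have key : ∀ k, 1 ≤ k → k ≤ ℓ → ∃ q : G.Walk (σ v) (f^[k] v),
      q.support = (List.range k).map (fun a => f^[a + 1] v) := by
    intro k hk1 hkℓ
    induction k with
    | zero => omega
    | succ n ih =>
      rcases Nat.eq_zero_or_pos n with rfl | hn
      · exact ⟨SimpleGraph.Walk.nil.copy rfl (by simp [hf]), by simp [hf]⟩
      · obtain ⟨q, hq⟩ := ih hn (by omega)
        refine ⟨q.concat (hadj n (by omega)), ?_⟩
        rw [SimpleGraph.Walk.support_concat, hq,
          List.range_succ, List.map_append]
        simp
  obtain ⟨q, hq⟩ := key ℓ (by omega) le_rfl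
  have hnodup : q.support.Nodup := by
    rw [hq]
    refine (List.nodup_range).map_on ?_
    intro a ha b hb hab
    simp only [List.mem_range] at ha hb
    have h2 : f (f^[a] v) = f (f^[b] v) := by
      simpa [Function.iterate_succ_apply'] using hab
    exact hinj (Set.mem_Iio.2 ha) (Set.mem_Iio.2 hb) (σ.injective h2)
  have hqpath : q.IsPath := (SimpleGraph.Walk.isPath_def q).mpr hnodup
  -- the short path
  have hav : G.Adj (σ v) v := (h v).resolve_left hσv
  let A : G.Walk (σ v) v := SimpleGraph.Walk.cons hav SimpleGraph.Walk.nil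
  have hApath : A.IsPath := by
    rw [SimpleGraph.Walk.isPath_def]
    simp [A, hσv]
    exact hσv
  -- compare
  let q' : G.Walk (σ v) v := q.copy rfl hiter
  have hq'path : q'.IsPath := (SimpleGraph.Walk.isPath_copy q rfl hiter).mpr hqpath
  have := hG.path_unique ⟨A, hApath⟩ ⟨q', hq'path⟩
  have hlen : A.length = q'.length := by rw [congrArg (fun P => P.1.length) this]
  have hAlen : A.length = 1 := rfl
  have hqlen : q'.length = ℓ - 1 := by
    have h1 : q'.support.length = q'.length + 1 := SimpleGraph.Walk.length_support _
    have h2 : q'.support = q.support := SimpleGraph.Walk.support_copy _ _ _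
    rw [h2, hq] at h1
    simp at h1
    omega
  omega

/-- The matrix `t S - Sᵀ`. -/
noncomputable def AM (G : SimpleGraph V) {m : ℕ} (e : V ≃ Fin m) :
    Matrix (Fin m) (Fin m) (Polynomial ℤ) :=
  (X : Polynomial ℤ) • ((seifertMatrix G e).map fun a => (C a : Polynomial ℤ)) -
    ((seifertMatrix G e).map fun a => (C a : Polynomial ℤ))ᵀ

lemma AM_apply (G : SimpleGraph V) {m : ℕ} (e : V ≃ Fin m) (a b : Fin m) :
    AM G e a b = X * C (seifertMatrix G e a b) - C (seifertMatrix G e b a) := by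
  simp [AM, Matrix.sub_apply, Matrix.smul_apply, Matrix.transpose_apply, Matrix.map_apply,
    smul_eq_mul]

lemma AM_diag (G : SimpleGraph V) {m : ℕ} (e : V ≃ Fin m) (a : Fin m) :
    AM G e a a = 1 - X := by
  rw [AM_apply]
  simp [seifertMatrix]
  ring

lemma AM_zero (G : SimpleGraph V) {m : ℕ} (e : V ≃ Fin m) {a b : Fin m} (hab : a ≠ b)
    (hn : ¬ G.Adj (e.symm a) (e.symm b)) : AM G e a b = 0 := by
  rw [AM_apply]
  have h1 : seifertMatrix G e a b = 0 := by
    simp [seifertMatrix, hab, hn]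
  have hn' : ¬ G.Adj (e.symm b) (e.symm a) := fun h => hn h.symm
  have h2 : seifertMatrix G e b a = 0 := by
    simp [seifertMatrix, hab.symm, hn']
  rw [h1, h2]
  simp

lemma AM_of_lt (G : SimpleGraph V) {m : ℕ} (e : V ≃ Fin m) {a b : Fin m} (h : a < b)
    (ha : G.Adj (e.symm a) (e.symm b)) : AM G e a b = X := by
  rw [AM_apply]
  have h1 : seifertMatrix G e a b = 1 := by simp [seifertMatrix, h.ne, h, ha]
  have h2 : seifertMatrix G e b a = 0 := by
    simp [seifertMatrix, h.ne', not_lt.2 h.le]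
  rw [h1, h2]
  simp

lemma AM_of_gt (G : SimpleGraph V) {m : ℕ} (e : V ≃ Fin m) {a b : Fin m} (h : b < a)
    (ha : G.Adj (e.symm a) (e.symm b)) : AM G e a b = -1 := by
  rw [AM_apply]
  have h1 : seifertMatrix G e a b = 0 := by
    simp [seifertMatrix, h.ne', not_lt.2 h.le]
  have h2 : seifertMatrix G e b a = 1 := by simp [seifertMatrix, h.ne, h, ha.symm]
  rw [h1, h2]
  simp

lemma AM_mul (G : SimpleGraph V) {m : ℕ} (e : V ≃ Fin m) {a b : Fin m} (hab : a ≠ b)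
    (ha : G.Adj (e.symm a) (e.symm b)) : AM G e a b * AM G e b a = -X := by
  rcases lt_or_gt_of_ne hab with h | h
  · rw [AM_of_lt G e h ha, AM_of_gt G e h ha.symm]; ring
  · rw [AM_of_gt G e h ha, AM_of_lt G e h ha.symm]; ring

lemma AM_ne_zero (G : SimpleGraph V) {m : ℕ} (e : V ≃ Fin m) {a b : Fin m}
    (h : a = b ∨ G.Adj (e.symm a) (e.symm b)) : AM G e a b ≠ 0 := by
  rcases h with rfl | h
  · rw [AM_diag]
    intro h0
    have := congrArg (fun q => Polynomial.coeff q 1) h0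
    simp [Polynomial.coeff_one] at this
  · have hab : a ≠ b := by
      intro hh; subst hh; exact G.loopless.irrefl _ h
    rcases lt_or_gt_of_ne hab with hlt | hgt
    · rw [AM_of_lt G e hlt h]; exact X_ne_zero
    · rw [AM_of_gt G e hgt h]
      intro h0
      have := congrArg (fun q => Polynomial.coeff q 0) h0
      simp at this

/-- `det (t S - Sᵀ)` does not depend on the enumeration of the vertices. -/
theorem alexDet_independent_of_enumeration (G : SimpleGraph V) (hG : G.IsTree)
    {m : ℕ} (e e' : V ≃ Fin m) :
    alexDet G e = alexDet G e' := by
  classical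
  let K := FractionRing (Polynomial ℤ)
  let φ : Polynomial ℤ →+* K := algebraMap _ _
  have hφ : Function.Injective φ := IsFractionRing.injective _ _
  apply hφ
  have hle : ∀ (f : V ≃ Fin m), φ (alexDet G f) = ((AM G f).map φ).det := by
    intro f
    rw [show ((AM G f).map φ) = φ.mapMatrix (AM G f) from rfl, ← RingHom.map_det]
    rfl
  show φ (alexDet G e) = φ (alexDet G e')
  rw [hle, hle]
  set p : Fin m ≃ Fin m := e.symm.trans e' with hp
  have hps : ∀ a, e'.symm (p a) = e.symm a := fun a => by simp [hp]
  have hφX : φ (-X) ≠ 0 := fun h0 => by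
    have : (-X : Polynomial ℤ) = 0 := hφ (by simpa using h0)
    simpa [neg_eq_zero] using this
  have hprod : ∀ σ : Equiv.Perm (Fin m),
      ∏ j, ((AM G e').map φ) (p (σ j)) (p j) = ∏ j, ((AM G e).map φ) (σ j) j := by
    intro σ
    by_cases hc : ∀ j, σ j = j ∨ G.Adj (e.symm (σ j)) (e.symm j)
    · -- σ is an involution
      have hτ : ∀ j, σ (σ j) = j := by
        intro j
        set τ : Equiv.Perm V := (Equiv.permCongr e.symm) σ with hτdef
        have hτv : ∀ v, τ v = e.symm (σ (e v)) := fun v => by simp [hτdef]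
        have h1 : ∀ v, τ v = v ∨ G.Adj (τ v) v := by
          intro v
          rcases hc (e v) with h' | h'
          · left; rw [hτv, h']; simp
          · right; rw [hτv]; simpa using h'
        have h2 := sq_eq_one_of_adj hG.IsAcyclic τ h1 (e.symm j)
        rw [hτv, hτv] at h2
        simp only [Equiv.apply_symm_apply] at h2
        exact e.symm.injective h2
      set f : Fin m → K := fun j => ((AM G e').map φ) (p (σ j)) (p j) with hfdef
      set g : Fin m → K := fun j => ((AM G e).map φ) (σ j) j with hgdef
      have hfval : ∀ j, f j = φ (AM G e' (p (σ j)) (p j)) := fun j => rfl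
      have hgval : ∀ j, g j = φ (AM G e (σ j) j) := fun j => rfl
      have hgne : ∀ j, g j ≠ 0 := by
        intro j h0
        refine AM_ne_zero G e (a := σ j) (b := j) ?_ (hφ (by rw [hgval] at h0; simpa using h0))
        rcases hc j with h' | h'
        · exact Or.inl h'
        · exact Or.inr h'
      have hFone : ∀ j, σ j = j → f j / g j = 1 := by
        intro j hj
        rw [hfval, hgval, hj, AM_diag, AM_diag]
        exact div_self (fun h0 => hgne j (by rw [hgval, hj, AM_diag]; exact h0))
      have key : ∀ j, (f j / g j) * (f (σ j) / g (σ j)) = 1 := by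
        intro j
        by_cases hj : σ j = j
        · rw [hFone j hj, hj, hFone j hj, one_mul]
        · have hadj : G.Adj (e.symm (σ j)) (e.symm j) := (hc j).resolve_left hj
          have hji : σ (σ j) = j := hτ j
          have hf2 : f j * f (σ j) = φ (-X) := by
            rw [hfval, hfval, hji, ← _root_.map_mul φ]
            congr 1
            exact AM_mul G e' (fun hh => hj (p.injective hh))
              (by rw [hps, hps]; exact hadj)
          have hg2 : g j * g (σ j) = φ (-X) := by
            rw [hgval, hgval, hji, ← _root_.map_mul φ]
            congr 1
            exact AM_mul G e hj hadj
          rw [div_mul_div_comm, hf2, hg2, div_self hφX]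
      have h1 : ∏ j, (f j / g j) = 1 := by
        apply Finset.prod_ninvolution (g := fun j => σ j) key
        · intro a ha
          by_contra hcon
          exact ha (hFone a hcon)
        · intro a; exact Finset.mem_univ _
        · exact hτ
      calc ∏ j, f j = ∏ j, (f j / g j * g j) := by
            refine Finset.prod_congr rfl fun j _ => ?_
            rw [div_mul_cancel₀ _ (hgne j)]
        _ = (∏ j, (f j / g j)) * ∏ j, g j := Finset.prod_mul_distrib
        _ = ∏ j, g j := by rw [h1, one_mul]
    · rcases not_forall.mp hc with ⟨j, hj⟩
      rw [not_or] at hj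
      obtain ⟨hj1, hj2⟩ := hj
      rw [Finset.prod_eq_zero (Finset.mem_univ j), Finset.prod_eq_zero (Finset.mem_univ j)]
      · show φ (AM G e (σ j) j) = 0
        rw [AM_zero G e hj1 hj2, map_zero]
      · show φ (AM G e' (p (σ j)) (p j)) = 0
        rw [AM_zero G e' (fun hh => hj1 (p.injective hh)) (by rw [hps, hps]; exact hj2),
          map_zero]
  rw [Matrix.det_apply, Matrix.det_apply,
    ← Equiv.sum_comp (Equiv.permCongr p)
      (fun σ => Equiv.Perm.sign σ • ∏ i, ((AM G e').map φ) (σ i) i)]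
  refine Finset.sum_congr rfl fun σ _ => ?_
  rw [Equiv.Perm.sign_permCongr]
  refine congrArg (fun z => Equiv.Perm.sign σ • z) (Eq.symm ?_)
  calc ∏ i, ((AM G e').map φ) ((Equiv.permCongr p σ) i) i
      = ∏ i, ((AM G e').map φ) (p (σ (p.symm i))) i := by
        simp only [Equiv.permCongr_apply]
    _ = ∏ j, ((AM G e').map φ) (p (σ (p.symm (p j)))) (p j) :=
        (Equiv.prod_comp p (fun i => ((AM G e').map φ) (p (σ (p.symm i))) i)).symm
    _ = ∏ j, ((AM G e').map φ) (p (σ j)) (p j) := by simp only [Equiv.symm_apply_apply]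
    _ = ∏ j, ((AM G e).map φ) (σ j) j := hprod σ


end Seifert
end

section
/- Let T be a finite tree with V vertices, enumerated 1,…,V, and let S be its Seifert matrix. Then det(S − Sᵀ) = 1 if T admits a perfect matching, and det(S − Sᵀ) = 0 otherwise. -/
open Polynomial Matrix

attribute [local instance] Classical.propDecidable

namespace Seifert

variable {V : Type} [Fintype V]

section AuxProof

open Equiv Function

variable {G : SimpleGraph V}

/-- Build a walk from a sequence of pairwise-adjacent vertices. -/
noncomputable def auxWalkOf (c : ℕ → V) : (n : ℕ) → (∀ j < n, G.Adj (c j) (c (j+1))) → G.Walk (c 0) (c n)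
  | 0, _ => SimpleGraph.Walk.nil
  | n+1, h => (auxWalkOf c n (fun j hj => h j (Nat.lt_succ_of_lt hj))).concat (h n (Nat.lt_succ_self n))

omit [Fintype V] in
lemma auxWalkOf_length (c : ℕ → V) (n : ℕ) (h : ∀ j < n, G.Adj (c j) (c (j+1))) :
    (auxWalkOf c n h).length = n := by
  induction n with
  | zero => rfl
  | succ n ih => simp [auxWalkOf, SimpleGraph.Walk.length_concat, ih]

omit [Fintype V] in
lemma auxWalkOf_support (c : ℕ → V) (n : ℕ) (h : ∀ j < n, G.Adj (c j) (c (j+1))) :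
    (auxWalkOf c n h).support = (List.range (n+1)).map c := by
  induction n with
  | zero => simp [auxWalkOf, List.range_succ]
  | succ n ih =>
    rw [auxWalkOf, SimpleGraph.Walk.support_concat, ih, List.range_succ (n := n+1)]
    simp

omit [Fintype V] in
lemma no_good_cycle (hG : G.IsAcyclic) (c : ℕ → V) (n : ℕ) (hn : 2 ≤ n)
    (hadj : ∀ j < n, G.Adj (c j) (c (j+1))) (hclose : G.Adj (c n) (c 0))
    (hinj : ∀ i ≤ n, ∀ j ≤ n, c i = c j → i = j) : False := by
  have hp1 : (auxWalkOf c n hadj).IsPath := by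
    rw [SimpleGraph.Walk.isPath_def, auxWalkOf_support]
    rw [List.nodup_map_iff_inj_on List.nodup_range]
    intro i hi j hj hc
    exact hinj i (by simpa using Nat.lt_succ_iff.mp (List.mem_range.mp hi))
      j (by simpa using Nat.lt_succ_iff.mp (List.mem_range.mp hj)) hc
  have hp2 : (SimpleGraph.Walk.cons hclose.symm SimpleGraph.Walk.nil : G.Walk (c 0) (c n)).IsPath := by
    rw [SimpleGraph.Walk.isPath_def]
    simp [SimpleGraph.Walk.support_cons]
    intro h
    have := hinj 0 (by omega) n (by omega) h
    omega
  have := hG.path_unique ⟨auxWalkOf c n hadj, hp1⟩ ⟨_, hp2⟩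
  have hl : (auxWalkOf c n hadj).length = 1 := by
    rw [Subtype.ext_iff] at this
    simp at this
    rw [this]
    rfl
  rw [auxWalkOf_length] at hl
  omega

lemma perm_periodic (σ : Equiv.Perm V) (v : V) : 0 < Function.minimalPeriod σ v := by
  apply Function.IsPeriodicPt.minimalPeriod_pos (n := orderOf σ) (orderOf_pos σ)
  unfold Function.IsPeriodicPt Function.IsFixedPt
  rw [Equiv.Perm.iterate_eq_pow, pow_orderOf_eq_one]
  rfl

omit [Fintype V] in
lemma perm_pow_minimalPeriod (σ : Equiv.Perm V) (v : V) :
    (σ ^ Function.minimalPeriod σ v) v = v := by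
  have := Function.iterate_minimalPeriod (f := ⇑σ) (x := v)
  rwa [Equiv.Perm.iterate_eq_pow] at this

omit [Fintype V] in
lemma perm_pow_succ_apply (σ : Equiv.Perm V) (n : ℕ) (v : V) :
    (σ ^ (n+1)) v = σ ((σ ^ n) v) := by rw [pow_succ']; rfl

lemma valid_involutive (hG : G.IsAcyclic) (σ : Equiv.Perm V)
    (hσ : ∀ v, G.Adj (σ v) v) : ∀ v, σ (σ v) = v := by
  intro v
  by_contra hv
  set k := Function.minimalPeriod σ v with hk
  have hinj : ∀ i ≤ k - 1, ∀ j ≤ k - 1, (σ ^ i) v = (σ ^ j) v → i = j := by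
    intro i hi j hj hij
    have h0 : 0 < k := perm_periodic σ v
    exact Function.iterate_injOn_Iio_minimalPeriod (f := ⇑σ) (x := v)
      (by simp only [Set.mem_Iio]; omega) (by simp only [Set.mem_Iio]; omega)
      (by simpa [Equiv.Perm.iterate_eq_pow] using hij)
  have h1 : σ v ≠ v := fun h => G.irrefl (h ▸ hσ v)
  have hk1 : k ≠ 1 := by
    intro h
    apply h1
    have := perm_pow_minimalPeriod σ v
    rwa [← hk, h, pow_one] at this
  have hk2 : k ≠ 2 := by
    intro h
    apply hv
    have := perm_pow_minimalPeriod σ v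
    rwa [← hk, h, pow_two] at this
  have h0 : 0 < k := perm_periodic σ v
  refine no_good_cycle hG (fun j => (σ ^ j) v) (k - 1) (by omega) ?_ ?_ hinj
  · intro j hj
    show G.Adj ((σ ^ j) v) ((σ ^ (j+1)) v)
    rw [perm_pow_succ_apply]
    exact (hσ _).symm
  · have : (σ ^ (k - 1 + 1)) v = v := by
      rw [show k - 1 + 1 = k by omega]
      exact perm_pow_minimalPeriod σ v
    have h2 : σ ((σ ^ (k-1)) v) = v := by
      rw [← perm_pow_succ_apply]; exact this
    have := hσ ((σ ^ (k-1)) v)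
    rw [h2] at this
    simpa using this.symm

lemma valid_unique (hG : G.IsAcyclic) (σ τ : Equiv.Perm V)
    (hσ : ∀ v, G.Adj (σ v) v) (hτ : ∀ v, G.Adj (τ v) v) : σ = τ := by
  have hσ2 := valid_involutive hG σ hσ
  have hτ2 := valid_involutive hG τ hτ
  by_contra hne
  obtain ⟨v, hv⟩ : ∃ v, σ v ≠ τ v := by
    by_contra h
    push_neg at h
    exact hne (Equiv.ext h)
  set π : Equiv.Perm V := τ * σ with hπ
  have hstep : ∀ n : ℕ, (π ^ (n+1)) v = τ (σ ((π ^ n) v)) := fun n => perm_pow_succ_apply π n v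
  have hτstep : ∀ n : ℕ, τ ((π ^ (n+1)) v) = σ ((π ^ n) v) := by
    intro n; rw [hstep n, hτ2]
  have hπv : π v ≠ v := by
    intro h
    apply hv
    have : τ (σ v) = v := h
    have := congrArg τ this
    rwa [hτ2] at this
  have noQ : ∀ g a b, (a - b) + (b - a) = g → σ ((π ^ a) v) = (π ^ b) v → False := by
    intro g
    induction g using Nat.strong_induction_on with
    | _ g ih =>
      intro a b hg hQ
      rcases Nat.lt_trichotomy a b with hab | hab | hab
      · rcases Nat.lt_or_ge (a+1) b with h2 | h2
        · obtain ⟨c, rfl⟩ : ∃ c, b = c + 1 := ⟨b - 1, by omega⟩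
          have := congrArg τ hQ
          rw [hτstep c] at this
          have : σ ((π ^ c) v) = (π ^ (a+1)) v := by
            rw [← this, hstep a, hQ]
          exact ih ((c - (a+1)) + ((a+1) - c)) (by omega) c (a+1) rfl this
        · have hb : b = a + 1 := by omega
          subst hb
          have hfix : τ (σ ((π ^ a) v)) = σ ((π ^ a) v) := (hstep a).symm.trans hQ.symm
          have := hτ (σ ((π ^ a) v))
          rw [hfix] at this
          exact G.irrefl this
      · subst hab
        exact G.irrefl (hQ ▸ hσ ((π ^ a) v))
      · have hQ' : σ ((π ^ b) v) = (π ^ a) v := by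
          have := congrArg σ hQ
          rw [hσ2] at this
          exact this.symm
        rcases Nat.lt_or_ge (b+1) a with h2 | h2
        · obtain ⟨c, rfl⟩ : ∃ c, a = c + 1 := ⟨a - 1, by omega⟩
          have := congrArg τ hQ'
          rw [hτstep c] at this
          have : σ ((π ^ c) v) = (π ^ (b+1)) v := by
            rw [← this, hstep b, hQ']
          exact ih ((c - (b+1)) + ((b+1) - c)) (by omega) c (b+1) rfl this
        · have ha : a = b + 1 := by omega
          subst ha
          have hfix : τ (σ ((π ^ b) v)) = σ ((π ^ b) v) := (hstep b).symm.trans hQ'.symm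
          have := hτ (σ ((π ^ b) v))
          rw [hfix] at this
          exact G.irrefl this
  have noQ' : ∀ a b, σ ((π ^ a) v) ≠ (π ^ b) v := fun a b h => noQ _ a b rfl h
  set k := Function.minimalPeriod π v with hk
  have h0 : 0 < k := perm_periodic π v
  have hk1 : k ≠ 1 := by
    intro h
    exact hπv (by have := perm_pow_minimalPeriod π v; rwa [← hk, h, pow_one] at this)
  have hpinj : ∀ i < k, ∀ j < k, (π ^ i) v = (π ^ j) v → i = j := by
    intro i hi j hj hij
    exact Function.iterate_injOn_Iio_minimalPeriod (f := ⇑π) (x := v)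
      (by simpa using hi) (by simpa using hj)
      (by simpa [Equiv.Perm.iterate_eq_pow] using hij)
  set c : ℕ → V := fun j => if j % 2 = 0 then (π ^ (j/2)) v else σ ((π ^ (j/2)) v) with hc
  refine no_good_cycle hG c (2*k - 1) (by omega) ?_ ?_ ?_
  · intro j hj
    rcases Nat.even_or_odd j with ⟨n, hn⟩ | ⟨n, hn⟩
    · subst hn
      have e1 : c (n + n) = (π ^ n) v := by simp [hc, Nat.mul_div_cancel_left, (by omega : (n+n) % 2 = 0), (by omega : (n+n)/2 = n)]
      have e2 : c (n + n + 1) = σ ((π ^ n) v) := by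
        simp [hc, (by omega : (n+n+1) % 2 = 1), (by omega : (n+n+1)/2 = n)]
      rw [e1, e2]
      exact (hσ _).symm
    · subst hn
      have e1 : c (2*n + 1) = σ ((π ^ n) v) := by
        simp [hc, (by omega : (2*n+1) % 2 = 1), (by omega : (2*n+1)/2 = n)]
      have e2 : c (2*n + 1 + 1) = (π ^ (n+1)) v := by
        simp [hc, (by omega : (2*n+2) % 2 = 0), (by omega : (2*n+2)/2 = n+1)]
      rw [e1, e2, hstep]
      exact (hτ _).symm
  · have e1 : c (2*k - 1) = σ ((π ^ (k-1)) v) := by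
      simp [hc, (by omega : (2*k-1) % 2 = 1), (by omega : (2*k-1)/2 = k-1)]
    have e0 : c 0 = v := by simp [hc]
    rw [e1, e0]
    have h2 : τ (σ ((π ^ (k-1)) v)) = v := by
      rw [← hstep, (by omega : k - 1 + 1 = k), hk]
      exact perm_pow_minimalPeriod π v
    have := (hτ (σ ((π ^ (k-1)) v))).symm
    rw [h2] at this
    exact this
  · intro i hi j hj hij
    have hik : i / 2 < k := by omega
    have hjk : j / 2 < k := by omega
    rcases Nat.eq_zero_or_pos (i % 2) with hi2 | hi2 <;> rcases Nat.eq_zero_or_pos (j % 2) with hj2 | hj2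
    · simp only [hc, hi2, hj2, if_pos rfl] at hij
      have := hpinj _ hik _ hjk (by simpa using hij)
      omega
    · have hj2' : j % 2 = 1 := by omega
      simp only [hc, hi2, hj2'] at hij
      exact absurd hij.symm (by simpa using noQ' (j/2) (i/2))
    · have hi2' : i % 2 = 1 := by omega
      simp only [hc, hi2', hj2] at hij
      exact absurd hij (by simpa using noQ' (i/2) (j/2))
    · have hi2' : i % 2 = 1 := by omega
      have hj2' : j % 2 = 1 := by omega
      simp only [hc, hi2', hj2'] at hij
      have : (π ^ (i/2)) v = (π ^ (j/2)) v := σ.injective (by simpa using hij)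
      have := hpinj _ hik _ hjk this
      omega

lemma sign_prod_involution : ∀ (n : ℕ) (ι : Type) (_ : Fintype ι) (_ : DecidableEq ι),
    Fintype.card ι = n → ∀ (σ : Equiv.Perm ι), (∀ i, σ i ≠ i) → (∀ i, σ (σ i) = i) →
    ∀ (f : ι → ℤ), (∀ i, f i * f (σ i) = -1) →
    (Equiv.Perm.sign σ : ℤ) * ∏ i, f i = 1 := by
  intro n
  induction n using Nat.strong_induction_on with
  | _ n ih =>
    intro ι _ _ hcard σ hfpf hinv f hf
    rcases isEmpty_or_nonempty ι with hemp | hne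
    · have : σ = 1 := Subsingleton.elim _ _
      simp [this]
    · obtain ⟨a⟩ := hne
      set b := σ a with hb
      have hab : a ≠ b := fun h => hfpf a h.symm
      have hσb : σ b = a := by rw [hb, hinv]
      set p : ι → Prop := fun x => x ≠ a ∧ x ≠ b with hp
      have hclosed : ∀ x, p x ↔ p (σ x) := by
        intro x
        simp only [hp]
        constructor
        · rintro ⟨h1, h2⟩
          constructor
          · intro h
            apply h2
            have := congrArg σ h
            rw [hinv, ← hb] at this
            exact this
          · intro h
            exact h1 (σ.injective (h.trans hb))
        · rintro ⟨h1, h2⟩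
          constructor
          · intro h; subst h; exact h2 hb.symm
          · intro h; subst h; exact h1 hσb
      set τ := σ.subtypePerm (fun x => (hclosed x).symm) with hτ
      have hab2 : ({a, b} : Finset ι).card = 2 := by
        rw [Finset.card_insert_of_notMem (by simp [hab]), Finset.card_singleton]
      have hcard' : Fintype.card {x // p x} = n - 2 := by
        have h3 : Fintype.card {x // p x} = Fintype.card ι - 2 := by
          rw [Fintype.card_subtype]
          rw [show Finset.filter p Finset.univ = Finset.univ \ {a, b} by
            ext x; simp [hp, and_comm]]
          rw [Finset.card_sdiff_of_subset (by simp), hab2, Finset.card_univ]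
        omega
      have hn2 : 2 ≤ n := by
        have := Finset.card_le_card (Finset.subset_univ ({a,b} : Finset ι))
        rw [hab2, Finset.card_univ, hcard] at this
        exact this
      have ihτ := ih (n - 2) (by omega) {x // p x} inferInstance inferInstance hcard' τ
        (fun i => fun h => hfpf i (congrArg Subtype.val h))
        (fun i => Subtype.ext (hinv i))
        (fun x => f x.1) (fun i => hf i.1)
      have hsign : Equiv.Perm.sign σ = - Equiv.Perm.sign τ := by
        have h1 : σ = Equiv.swap a b * (Equiv.swap a b * σ) := by
          rw [← mul_assoc, Equiv.swap_mul_self, one_mul]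
        have hfix : ∀ x, (Equiv.swap a b * σ) x ≠ x → p x := by
          intro x hx
          by_contra hpx
          simp only [hp, not_and_or, not_not] at hpx
          rcases hpx with h | h
          · apply hx
            rw [h]
            show Equiv.swap a b (σ a) = a
            rw [← hb, Equiv.swap_apply_right]
          · apply hx
            rw [h]
            show Equiv.swap a b (σ b) = b
            rw [hσb, Equiv.swap_apply_left]
        have hclosed' : ∀ x, p x ↔ p ((Equiv.swap a b * σ) x) := by
          intro x
          have hagree : ∀ y, p y → (Equiv.swap a b * σ) y = σ y := by
            intro y hy
            have := (hclosed y).mp hy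
            simp [Equiv.Perm.mul_apply, Equiv.swap_apply_of_ne_of_ne this.1 this.2]
          constructor
          · intro hx; rw [hagree x hx]; exact (hclosed x).mp hx
          · intro hx
            by_contra hpx
            have : (Equiv.swap a b * σ) x = x := by
              by_contra hne'
              exact hpx (hfix x hne')
            rw [this] at hx
            exact hpx hx
        have hsub : Equiv.Perm.sign ((Equiv.swap a b * σ).subtypePerm (fun x => (hclosed' x).symm)) =
            Equiv.Perm.sign (Equiv.swap a b * σ) :=
          Equiv.Perm.sign_subtypePerm _ (fun x => (hclosed' x).symm) hfix
        have heq : (Equiv.swap a b * σ).subtypePerm (fun x => (hclosed' x).symm) = τ := by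
          ext x
          have hx := (hclosed x.1).mp x.2
          simp [hτ, Equiv.Perm.subtypePerm, Equiv.Perm.mul_apply,
            Equiv.swap_apply_of_ne_of_ne hx.1 hx.2]
        rw [heq] at hsub
        calc Equiv.Perm.sign σ = Equiv.Perm.sign (Equiv.swap a b * (Equiv.swap a b * σ)) := by rw [← h1]
          _ = Equiv.Perm.sign (Equiv.swap a b) * Equiv.Perm.sign (Equiv.swap a b * σ) := by
              rw [Equiv.Perm.sign_mul]
          _ = - Equiv.Perm.sign τ := by rw [Equiv.Perm.sign_swap hab, hsub, neg_one_mul]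
      have hsubp : ∏ i ∈ Finset.univ.filter p, f i = ∏ x : {x // p x}, f x.1 :=
        Finset.prod_subtype (Finset.univ.filter p) (by intro x; simp [hp]) f
      have hprod : ∏ i, f i = (f a * f b) * ∏ x : {x // p x}, f x.1 := by
        have hsplit : (Finset.univ : Finset ι) = {a, b} ∪ Finset.univ.filter p := by
          ext x; by_cases hxa : x = a <;> by_cases hxb : x = b <;> simp [hp, hxa, hxb]
        rw [hsplit, Finset.prod_union (by
          rw [Finset.disjoint_left]; intro x hx; simp at hx
          rcases hx with rfl | rfl <;> simp [hp]),
          Finset.prod_insert (by simp [hab]), Finset.prod_singleton, hsubp]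
      have hfab : f a * f b = -1 := by rw [hb]; exact hf a
      have ihτ' : (Equiv.Perm.sign τ : ℤ) * ∏ x : {x // p x}, f x.1 = 1 := ihτ
      rw [hprod, hfab, hsign]
      simp only [Units.val_neg]
      linear_combination ihτ'

/-- From a perfect matching, get an adjacency involution. -/
lemma exists_valid_perm_of_perfect {R : Finset (Sym2 V)} (h : IsPerfectMatching G R) :
    ∃ μ : Equiv.Perm V, (∀ v, G.Adj (μ v) v) ∧ ∀ v, μ (μ v) = v := by
  classical
  choose ev hevR hmem using h.2
  set g : V → V := fun v => Sym2.Mem.other (hmem v) with hg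
  have hEdge : ∀ v, s(v, g v) = ev v := by
    intro v
    simp only [hg]
    exact Sym2.other_spec (hmem v)
  have hAdj : ∀ v, G.Adj v (g v) := by
    intro v
    have := h.1.1 (ev v) (hevR v)
    rw [← hEdge v] at this
    exact this
  have hginv : ∀ v, g (g v) = v := by
    intro v
    have h1 : g v ∈ ev v := by rw [← hEdge v]; exact Sym2.mem_mk_right v (g v)
    have h2 : g v ∈ ev (g v) := hmem (g v)
    have heq : ev (g v) = ev v := by
      by_contra hne
      exact h.1.2 (ev (g v)) (hevR _) (ev v) (hevR v) hne (g v) h2 h1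
    have h3 : s(g v, g (g v)) = s(v, g v) := (hEdge (g v)).trans (heq.trans (hEdge v).symm)
    rcases Sym2.eq_iff.mp h3 with ⟨h4, h5⟩ | ⟨h4, h5⟩
    · exact absurd (h4 ▸ hAdj v) (G.irrefl)
    · exact h5
  have hInv : Function.Involutive g := hginv
  exact ⟨hInv.toPerm, fun v => (hAdj v).symm, hginv⟩

/-- From an adjacency involution, get a perfect matching. -/
lemma perfect_of_valid (μ : Equiv.Perm V) (hμ : ∀ v, G.Adj (μ v) v) (hinv : ∀ v, μ (μ v) = v) :
    IsPerfectMatching G (Finset.image (fun v => s(v, μ v)) Finset.univ) := by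
  classical
  have key : ∀ (u : V) (w : V), u ∈ s(w, μ w) → s(w, μ w) = s(u, μ u) := by
    intro u w hu
    rcases Sym2.mem_iff.mp hu with rfl | rfl
    · rfl
    · rw [hinv w, Sym2.eq_swap]
  refine ⟨⟨?_, ?_⟩, ?_⟩
  · intro e he
    obtain ⟨v, _, rfl⟩ := Finset.mem_image.mp he
    exact (hμ v).symm
  · intro e he f hf hef u hue huf
    obtain ⟨v, _, rfl⟩ := Finset.mem_image.mp he
    obtain ⟨w, _, rfl⟩ := Finset.mem_image.mp hf
    exact hef ((key u v hue).trans (key u w huf).symm)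
  · intro v
    exact ⟨s(v, μ v), Finset.mem_image.mpr ⟨v, Finset.mem_univ v, rfl⟩, Sym2.mem_mk_left v _⟩

omit [Fintype V] in
lemma seifert_sub_apply {m : ℕ} (e : V ≃ Fin m) (i j : Fin m) :
    (seifertMatrix G e - (seifertMatrix G e)ᵀ) i j =
      if G.Adj (e.symm i) (e.symm j) then (if i < j then 1 else -1) else 0 := by
  classical
  simp only [Matrix.sub_apply, Matrix.transpose_apply, seifertMatrix]
  by_cases hij : i = j
  · subst hij
    simp [G.irrefl]
  · rw [if_neg hij, if_neg (Ne.symm hij)]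
    by_cases hadj : G.Adj (e.symm i) (e.symm j)
    · have hadj' : G.Adj (e.symm j) (e.symm i) := hadj.symm
      rcases lt_or_gt_of_ne (fun h : i = j => hij h) with hlt | hgt
      · rw [if_pos ⟨hlt, hadj⟩, if_neg (by rintro ⟨h1, _⟩; exact absurd h1 (not_lt.mpr hlt.le)),
          if_pos hadj, if_pos hlt]
        norm_num
      · rw [if_neg (by rintro ⟨h1, _⟩; exact absurd h1 (not_lt.mpr hgt.le)),
          if_pos ⟨hgt, hadj'⟩, if_pos hadj, if_neg (not_lt.mpr hgt.le)]
        norm_num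
    · have hadj' : ¬ G.Adj (e.symm j) (e.symm i) := fun h => hadj h.symm
      rw [if_neg (by rintro ⟨_, h2⟩; exact hadj h2), if_neg (by rintro ⟨_, h2⟩; exact hadj' h2),
        if_neg hadj]
      norm_num

end AuxProof

/-- `det (S - Sᵀ) = 1` if `T` admits a perfect matching, `0` otherwise. -/
theorem det_intersection_form (G : SimpleGraph V) (hG : G.IsTree)
    {m : ℕ} (e : V ≃ Fin m) :
    (seifertMatrix G e - (seifertMatrix G e)ᵀ).det =
      if ∃ R : Finset (Sym2 V), IsPerfectMatching G R then 1 else 0 := by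
  classical
  set A := seifertMatrix G e - (seifertMatrix G e)ᵀ with hA
  set valid : Equiv.Perm (Fin m) → Prop :=
    fun σ => ∀ i, G.Adj (e.symm (σ i)) (e.symm i) with hvalid
  -- transfer a valid permutation on `Fin m` to a valid permutation on `V`
  have toV : ∀ σ : Equiv.Perm (Fin m), valid σ →
      ∀ v, G.Adj ((Equiv.permCongr e.symm σ) v) v := by
    intro σ hσ v
    have := hσ (e v)
    simpa [Equiv.permCongr_apply] using this
  have hAc : G.IsAcyclic := hG.2
  -- valid permutations are involutions without fixed points
  have hfpf : ∀ σ : Equiv.Perm (Fin m), valid σ → ∀ i, σ i ≠ i := by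
    intro σ hσ i h
    exact G.irrefl (h ▸ hσ i)
  have hinvol : ∀ σ : Equiv.Perm (Fin m), valid σ → ∀ i, σ (σ i) = i := by
    intro σ hσ i
    have := valid_involutive hAc (Equiv.permCongr e.symm σ) (toV σ hσ) (e.symm i)
    simp only [Equiv.permCongr_apply, Equiv.symm_symm, Equiv.apply_symm_apply] at this
    apply e.symm.injective
    simpa using this
  -- valid permutations are unique
  have huniq : ∀ σ τ : Equiv.Perm (Fin m), valid σ → valid τ → σ = τ := by
    intro σ τ hσ hτ
    have := valid_unique hAc (Equiv.permCongr e.symm σ) (Equiv.permCongr e.symm τ)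
      (toV σ hσ) (toV τ hτ)
    exact (Equiv.permCongr e.symm).injective this
  -- terms corresponding to invalid permutations vanish
  have hterm0 : ∀ σ : Equiv.Perm (Fin m), ¬ valid σ →
      (Equiv.Perm.sign σ • ∏ i, A (σ i) i : ℤ) = 0 := by
    intro σ hσ
    obtain ⟨i, hi⟩ := not_forall.mp hσ
    have : A (σ i) i = 0 := by
      rw [hA, seifert_sub_apply, if_neg hi]
    rw [show (∏ j, A (σ j) j) = 0 from Finset.prod_eq_zero (Finset.mem_univ i) this, smul_zero]
  rw [Matrix.det_apply]
  by_cases hex : ∃ σ : Equiv.Perm (Fin m), valid σ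
  · obtain ⟨σ₀, hσ₀⟩ := hex
    have hR : ∃ R : Finset (Sym2 V), IsPerfectMatching G R :=
      ⟨_, perfect_of_valid (Equiv.permCongr e.symm σ₀) (toV σ₀ hσ₀)
        (fun v => by
          have := hinvol σ₀ hσ₀
          simp [Equiv.permCongr_apply, this (e v)])⟩
    rw [if_pos hR]
    rw [Finset.sum_eq_single σ₀]
    · -- the unique term equals 1
      have hf : ∀ i, A (σ₀ i) i * A (σ₀ (σ₀ i)) (σ₀ i) = -1 := by
        intro i
        rw [hinvol σ₀ hσ₀ i]
        rw [hA, seifert_sub_apply, seifert_sub_apply, if_pos (hσ₀ i), if_pos (hσ₀ i).symm]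
        rcases lt_or_gt_of_ne (hfpf σ₀ hσ₀ i) with h | h
        · rw [if_pos h, if_neg (not_lt.mpr h.le)]
          norm_num
        · rw [if_neg (not_lt.mpr h.le), if_pos h]
          norm_num
      have := sign_prod_involution m (Fin m) inferInstance inferInstance
        (Fintype.card_fin m) σ₀ (hfpf σ₀ hσ₀) (hinvol σ₀ hσ₀)
        (fun i => A (σ₀ i) i) hf
      rw [Units.smul_def]
      exact_mod_cast this
    · intro τ _ hτσ
      refine hterm0 τ (fun hτ => hτσ (huniq τ σ₀ hτ hσ₀))
    · intro h
      exact absurd (Finset.mem_univ σ₀) h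
  · have hR : ¬ ∃ R : Finset (Sym2 V), IsPerfectMatching G R := by
      rintro ⟨R, hRp⟩
      obtain ⟨μ, hμ1, _⟩ := exists_valid_perm_of_perfect hRp
      refine hex ⟨Equiv.permCongr e μ, ?_⟩
      intro i
      simpa [Equiv.permCongr_apply] using hμ1 (e.symm i)
    rw [if_neg hR]
    apply Finset.sum_eq_zero
    intro σ _
    exact hterm0 σ (fun hσ => hex ⟨σ, hσ⟩)


end Seifert
end
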